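/- arXiv:2312.06513 — 6 statements merged into one kernel-verified Lean document; each statement's English description precedes it below -/
import Mathlib

section
/- Let w be a valid weight function of a contiguous integral deformation of the braid arrangement on {1,…,n}, and let C = (i₀, i₁, …, i_k) be an m-ascending directed cycle of minimum length among all m-ascending directed cycles of w. Then for every pair of vertices i_r, i_s of C that are not cyclically consecutive on C, at least one of w(i_r, i_s) and w(i_s, i_r) equals −∞. -/
/-- Cyclically consecutive pairs along a list of vertices. -/
def cpairs {n : ℕ} (c : List (Fin n)) : List (Fin n × Fin n) := c.zip (c.rotate 1)

/-- `c` is a directed cycle of the weighted digraph `w`, an edge `u → v`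
being present when `w u v ≠ ⊥` (`⊥` stands for `-∞`). -/
def IsCycle {n : ℕ} (w : Fin n → Fin n → WithBot ℤ) (c : List (Fin n)) : Prop :=
  2 ≤ c.length ∧ c.Nodup ∧ ∀ p ∈ cpairs c, w p.1 p.2 ≠ ⊥

/-- Total weight of the edges of a cycle. -/
def cycWeight {n : ℕ} (w : Fin n → Fin n → WithBot ℤ) (c : List (Fin n)) : WithBot ℤ :=
  ((cpairs c).map fun p => w p.1 p.2).sum

/-- An `m`-ascending cycle: a directed cycle of nonnegative total weight. -/
def MAscending {n : ℕ} (w : Fin n → Fin n → WithBot ℤ) (c : List (Fin n)) : Prop :=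
  IsCycle w c ∧ 0 ≤ cycWeight w c

/-- A weighted digraph is `m`-acyclic if it has no `m`-ascending cycle. -/
def MAcyclic {n : ℕ} (w : Fin n → Fin n → WithBot ℤ) : Prop :=
  ∀ c : List (Fin n), ¬ MAscending w c

/-- `w` is a valid weight function of the contiguous integral deformation of
the braid arrangement determined by the bounds `a = α` and `b = β`:
`w i j ∈ {α i j, …, β i j} ∪ {⊥}`, `w i j = ⊥ ↔ w j i = β j i`, and
`w j i = -1 - w i j` whenever both values are finite.  There are no loops. -/
def ValidW {n : ℕ} (a b : Fin n → Fin n → ℤ) (w : Fin n → Fin n → WithBot ℤ) : Prop :=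
  (∀ i, w i i = ⊥) ∧
  ∀ i j : Fin n, i ≠ j →
    (w i j ≠ ⊥ → (a i j : WithBot ℤ) ≤ w i j ∧ w i j ≤ (b i j : WithBot ℤ)) ∧
    (w i j = ⊥ ↔ w j i = (b j i : WithBot ℤ)) ∧
    (∀ x y : ℤ, w i j = (x : WithBot ℤ) → w j i = (y : WithBot ℤ) → y = -1 - x)

lemma zip_rotate_one {α β : Type*} (l₁ : List α) (l₂ : List β) (h : l₁.length = l₂.length) :
    (l₁.zip l₂).rotate 1 = (l₁.rotate 1).zip (l₂.rotate 1) := by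
  cases l₁ with
  | nil => simp
  | cons a l₁ =>
    cases l₂ with
    | nil => simp at h
    | cons b l₂ =>
      simp only [List.length_cons, Nat.add_right_cancel_iff] at h
      show ((a, b) :: l₁.zip l₂).rotate (0 + 1) = ((a :: l₁).rotate (0+1)).zip ((b :: l₂).rotate (0+1))
      rw [List.rotate_cons_succ, List.rotate_cons_succ, List.rotate_cons_succ,
        List.rotate_zero, List.rotate_zero, List.rotate_zero, List.zip_append h]
      simp

lemma zip_rotate {α β : Type*} (k : ℕ) : ∀ (l₁ : List α) (l₂ : List β), l₁.length = l₂.length →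
    (l₁.zip l₂).rotate k = (l₁.rotate k).zip (l₂.rotate k) := by
  induction k with
  | zero => simp
  | succ k ih =>
    intro l₁ l₂ h
    have hr1 : (l₁.zip l₂).rotate (k+1) = ((l₁.zip l₂).rotate 1).rotate k := by
      rw [List.rotate_rotate, Nat.add_comm]
    have hr2 : l₁.rotate (k+1) = (l₁.rotate 1).rotate k := by
      rw [List.rotate_rotate, Nat.add_comm]
    have hr3 : l₂.rotate (k+1) = (l₂.rotate 1).rotate k := by
      rw [List.rotate_rotate, Nat.add_comm]
    rw [hr1, hr2, hr3, zip_rotate_one _ _ h, ih]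
    simp [h]

lemma cpairs_rotate {n : ℕ} (c : List (Fin n)) (k : ℕ) :
    cpairs (c.rotate k) = (cpairs c).rotate k := by
  unfold cpairs
  rw [zip_rotate k c (c.rotate 1) (by simp), List.rotate_rotate, List.rotate_rotate,
    Nat.add_comm]

lemma cpairs_cons {n : ℕ} (x : Fin n) (t : List (Fin n)) :
    cpairs (x :: t) = (x :: t).zip (t ++ [x]) := by
  unfold cpairs
  rw [show (1:ℕ) = 0 + 1 from rfl, List.rotate_cons_succ, List.rotate_zero]

lemma mascending_rotate {n : ℕ} (w : Fin n → Fin n → WithBot ℤ) (c : List (Fin n)) (k : ℕ)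
    (h : MAscending w c) : MAscending w (c.rotate k) := by
  obtain ⟨⟨hlen, hnd, he⟩, hw⟩ := h
  refine ⟨⟨by simpa using hlen, by simpa using hnd, ?_⟩, ?_⟩
  · intro p hp
    rw [cpairs_rotate] at hp
    exact he p (List.mem_rotate.mp hp)
  · unfold cycWeight at *
    rw [cpairs_rotate]
    rwa [List.Perm.sum_eq (List.Perm.map _ (List.rotate_perm _ _))]

lemma sum_ne_bot : ∀ (l : List (WithBot ℤ)), (∀ x ∈ l, x ≠ ⊥) → l.sum ≠ ⊥ := by
  intro l
  induction l with
  | nil => simp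
  | cons a t ih =>
    intro h hb
    rw [List.sum_cons, WithBot.add_eq_bot] at hb
    rcases hb with hb | hb
    · exact h a List.mem_cons_self hb
    · exact ih (fun x hx => h x (List.mem_cons_of_mem a hx)) hb

theorem stmt6 (n : ℕ) (a b : Fin n → Fin n → ℤ)
    (hab : ∀ i j : Fin n, i < j → a i j ≤ b i j)
    (hsym : ∀ i j : Fin n, i < j → a j i = -(b i j) ∧ b j i = -(a i j))
    (w : Fin n → Fin n → WithBot ℤ) (hw : ValidW a b w)
    (c : List (Fin n)) (hc : MAscending w c)
    (hmin : ∀ c' : List (Fin n), MAscending w c' → c.length ≤ c'.length)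
    (u v : Fin n) (hu : u ∈ c) (hv : v ∈ c) (huv : u ≠ v)
    (hncons : (u, v) ∉ cpairs c ∧ (v, u) ∉ cpairs c) :
    w u v = ⊥ ∨ w v u = ⊥ := by
  by_contra hcon
  push_neg at hcon
  obtain ⟨hub, hvb⟩ := hcon
  obtain ⟨x, hx⟩ := WithBot.ne_bot_iff_exists.mp hub
  obtain ⟨y, hy⟩ := WithBot.ne_bot_iff_exists.mp hvb
  have hxy : y = -1 - x := ((hw.2 u v huv).2.2) x y hx.symm hy.symm
  -- rotate c so that u is the head
  obtain ⟨p, q, hpq⟩ := List.append_of_mem hu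
  have hplen : p.length ≤ c.length := by subst hpq; simp
  have hrot : c.rotate p.length = u :: (q ++ p) := by
    conv_lhs => rw [hpq]
    rw [show p.length = (p.length : ℕ) from rfl]
    rw [List.rotate_eq_drop_append_take (by rw [hpq] at hplen; exact hplen),
      List.drop_left, List.take_left]
    simp
  have hv' : v ∈ q ++ p := by
    have hm : v ∈ c.rotate p.length := List.mem_rotate.mpr hv
    rw [hrot] at hm
    rcases List.mem_cons.mp hm with h | h
    · exact absurd h.symm huv
    · exact h
  obtain ⟨l1, l2, hl⟩ := List.append_of_mem hv'
  set c' : List (Fin n) := u :: (l1 ++ v :: l2) with hc'def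
  have hcc' : c.rotate p.length = c' := by rw [hrot, hl]
  have hc' : MAscending w c' := hcc' ▸ mascending_rotate w c p.length hc
  have hclen : c'.length = c.length := by rw [← hcc']; simp
  have hnc1 : (u, v) ∉ cpairs c' := by
    intro h
    apply hncons.1
    have : (u, v) ∈ (cpairs c).rotate p.length := by
      rw [← cpairs_rotate, hcc']; exact h
    exact List.mem_rotate.mp this
  have hnc2 : (v, u) ∉ cpairs c' := by
    intro h
    apply hncons.2
    have : (v, u) ∈ (cpairs c).rotate p.length := by
      rw [← cpairs_rotate, hcc']; exact h
    exact List.mem_rotate.mp this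
  -- the two arcs are nonempty
  have hl1 : l1 ≠ [] := by
    rintro rfl
    apply hnc1
    rw [hc'def]
    simp only [List.nil_append]
    rw [cpairs_cons]
    simp
  have hl2 : l2 ≠ [] := by
    rintro rfl
    apply hnc2
    rw [hc'def, cpairs_cons,
      show u :: (l1 ++ [v]) = (u :: l1) ++ [v] by simp,
      show (l1 ++ [v]) ++ [u] = (l1 ++ [v]) ++ [u] from rfl,
      List.zip_append (by simp)]
    simp
  -- split the cycle pairs
  set A : List (Fin n × Fin n) := (u :: l1).zip (l1 ++ [v]) with hA
  set B : List (Fin n × Fin n) := (v :: l2).zip (l2 ++ [u]) with hB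
  have hsplit : cpairs c' = A ++ B := by
    rw [hc'def, cpairs_cons,
      show u :: (l1 ++ v :: l2) = (u :: l1) ++ (v :: l2) by simp,
      show (l1 ++ v :: l2) ++ [u] = (l1 ++ [v]) ++ (l2 ++ [u]) by simp,
      List.zip_append (by simp)]
  set c1 : List (Fin n) := u :: (l1 ++ [v]) with hc1def
  set c2 : List (Fin n) := v :: (l2 ++ [u]) with hc2def
  have hsplit1 : cpairs c1 = A ++ [(v, u)] := by
    rw [hc1def, cpairs_cons,
      show u :: (l1 ++ [v]) = (u :: l1) ++ [v] by simp,
      List.zip_append (by simp)]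
    rfl
  have hsplit2 : cpairs c2 = B ++ [(u, v)] := by
    rw [hc2def, cpairs_cons,
      show v :: (l2 ++ [u]) = (v :: l2) ++ [u] by simp,
      List.zip_append (by simp)]
    rfl
  -- edge conditions
  have heA : ∀ p ∈ A, w p.1 p.2 ≠ ⊥ := fun p hp =>
    hc'.1.2.2 p (by rw [hsplit]; exact List.mem_append_left _ hp)
  have heB : ∀ p ∈ B, w p.1 p.2 ≠ ⊥ := fun p hp =>
    hc'.1.2.2 p (by rw [hsplit]; exact List.mem_append_right _ hp)
  -- sums are finite
  obtain ⟨sA, hsA⟩ := WithBot.ne_bot_iff_exists.mp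
    (sum_ne_bot (A.map fun p => w p.1 p.2)
      (by intro z hz; obtain ⟨p, hp, rfl⟩ := List.mem_map.mp hz; exact heA p hp))
  obtain ⟨sB, hsB⟩ := WithBot.ne_bot_iff_exists.mp
    (sum_ne_bot (B.map fun p => w p.1 p.2)
      (by intro z hz; obtain ⟨p, hp, rfl⟩ := List.mem_map.mp hz; exact heB p hp))
  have hwc' : cycWeight w c' = ((sA + sB : ℤ) : WithBot ℤ) := by
    unfold cycWeight
    rw [hsplit, List.map_append, List.sum_append, ← hsA, ← hsB]
    push_cast
    simp
  have hwc1 : cycWeight w c1 = ((sA + y : ℤ) : WithBot ℤ) := by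
    unfold cycWeight
    rw [hsplit1, List.map_append, List.sum_append, ← hsA]
    simp only [List.map_cons, List.map_nil, List.sum_cons, List.sum_nil]
    rw [← hy]
    push_cast
    simp
  have hwc2 : cycWeight w c2 = ((sB + x : ℤ) : WithBot ℤ) := by
    unfold cycWeight
    rw [hsplit2, List.map_append, List.sum_append, ← hsB]
    simp only [List.map_cons, List.map_nil, List.sum_cons, List.sum_nil]
    rw [← hx]
    push_cast
    simp
  have hpos : (0 : ℤ) ≤ sA + sB := by
    have h0 := hc'.2
    rw [hwc'] at h0
    exact_mod_cast h0
  -- nodup facts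
  have hnd' : c'.Nodup := hc'.1.2.1
  have hnd1 : c1.Nodup := by
    refine hnd'.sublist ?_
    rw [hc1def, hc'def]
    exact (((List.nil_sublist l2).cons₂ v).append_left l1).cons₂ u
  have hnd2 : c2.Nodup := by
    have hsub : (u :: v :: l2).Sublist c' := by
      rw [hc'def]
      exact (List.sublist_append_right l1 (v :: l2)).cons₂ u
    have hperm : ((v :: l2) ++ [u]).Perm (u :: v :: l2) :=
      List.perm_append_singleton u (v :: l2)
    rw [hc2def, show v :: (l2 ++ [u]) = (v :: l2) ++ [u] by simp]
    exact hperm.nodup_iff.mpr (hnd'.sublist hsub)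
  -- lengths
  have hlen' : c'.length = l1.length + l2.length + 2 := by rw [hc'def]; simp; omega
  have hlen1 : c1.length = l1.length + 2 := by rw [hc1def]; simp
  have hlen2 : c2.length = l2.length + 2 := by rw [hc2def]; simp
  have hl1p : 0 < l1.length := List.length_pos_iff.mpr hl1
  have hl2p : 0 < l2.length := List.length_pos_iff.mpr hl2
  -- one of the two short cycles is m-ascending
  have hcase : (0 : ℤ) ≤ sA + y ∨ (0 : ℤ) ≤ sB + x := by omega
  rcases hcase with hcase | hcase
  · have hma : MAscending w c1 := by
      refine ⟨⟨by omega, hnd1, ?_⟩, ?_⟩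
      · intro p hp
        rw [hsplit1] at hp
        rcases List.mem_append.mp hp with hp | hp
        · exact heA p hp
        · simp at hp; subst hp; exact hvb
      · rw [hwc1]; exact_mod_cast hcase
    have := hmin c1 hma
    omega
  · have hma : MAscending w c2 := by
      refine ⟨⟨by omega, hnd2, ?_⟩, ?_⟩
      · intro p hp
        rw [hsplit2] at hp
        rcases List.mem_append.mp hp with hp | hp
        · exact heB p hp
        · simp at hp; subst hp; exact hub
      · rw [hwc2]; exact_mod_cast hcase
    have := hmin c2 hma
    omega
end

section
/- Let a contiguous integral deformation of the braid arrangement on {1,…,n} satisfy β(i,k) ≤ β(i,j) + β(j,k) + 1 for all triples of pairwise distinct i, j, k ∈ {1,…,n}. Then a valid weight function w is m-acyclic (has no m-ascending directed cycle) if and only if it contains no m-ascending directed cycle of length at most four. -/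
section Stmt7Aux

variable {n : ℕ}

private lemma stmt7_sum_map_range {β : Type*} [AddCommMonoid β] (g : ℕ → β) (N : ℕ) :
    ((List.range N).map g).sum = ∑ i ∈ Finset.range N, g i := by
  induction N with
  | zero => simp
  | succ N ih =>
    rw [List.range_succ, List.map_append, List.sum_append, Finset.sum_range_succ, ih]
    simp

private lemma stmt7_coe_sum (g : ℕ → ℤ) (N : ℕ) :
    (∑ i ∈ Finset.range N, ((g i : ℤ) : WithBot ℤ)) = ((∑ i ∈ Finset.range N, g i : ℤ) : WithBot ℤ) := by
  induction N with
  | zero => simp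
  | succ N ih => rw [Finset.sum_range_succ, Finset.sum_range_succ, ih, WithBot.coe_add]

private lemma stmt7_length_cpairs (c : List (Fin n)) : (cpairs c).length = c.length := by
  simp [cpairs]

private lemma stmt7_getElem_cpairs (c : List (Fin n)) (d : Fin n) (i : ℕ)
    (hi : i < (cpairs c).length) :
    (cpairs c)[i] = (c.getD i d, c.getD ((i+1) % c.length) d) := by
  have hi' : i < c.length := by rwa [stmt7_length_cpairs] at hi
  have h0 : 0 < c.length := by omega
  show (c.zip (c.rotate 1))[i]'(by simpa [cpairs] using hi) = _
  rw [List.getElem_zip, List.getElem_rotate]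
  rw [List.getD_eq_getElem c d hi', List.getD_eq_getElem c d (Nat.mod_lt _ h0)]

private lemma stmt7_mem_cpairs (c : List (Fin n)) (d : Fin n) (i : ℕ) (hi : i < c.length) :
    (c.getD i d, c.getD ((i+1) % c.length) d) ∈ cpairs c := by
  have hi' : i < (cpairs c).length := by rwa [stmt7_length_cpairs]
  rw [← stmt7_getElem_cpairs c d i hi']
  exact List.getElem_mem _

private lemma stmt7_cycWeight_eq (w : Fin n → Fin n → WithBot ℤ) (c : List (Fin n)) (d : Fin n) :
    cycWeight w c
      = ∑ i ∈ Finset.range c.length, w (c.getD i d) (c.getD ((i+1) % c.length) d) := by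
  have he : (cpairs c).map (fun p => w p.1 p.2)
      = (List.range c.length).map (fun i => w (c.getD i d) (c.getD ((i+1) % c.length) d)) := by
    apply List.ext_getElem
    · simp [stmt7_length_cpairs]
    · intro i h1 h2
      simp only [List.getElem_map, List.getElem_range]
      rw [stmt7_getElem_cpairs c d i (by simpa using h1)]
  rw [cycWeight, he, stmt7_sum_map_range]

/-- chord-presence predicate along the cycle parametrization -/
private def Pk (w : Fin n → Fin n → WithBot ℤ) (v : ℕ → Fin n) (i k : ℕ) : Prop :=
  w (v i) (v (i+k)) ≠ ⊥

private lemma stmt7core (b : Fin n → Fin n → ℤ) (w : Fin n → Fin n → WithBot ℤ)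
    (htri : ∀ x y z : Fin n, x ≠ y → y ≠ z → x ≠ z → b x z ≤ b x y + b y z + 1)
    (V1 : ∀ x y : Fin n, x ≠ y → ∀ t : ℤ, w x y = (t : WithBot ℤ) → t ≤ b x y ∧ -t ≤ b y x)
    (V2 : ∀ x y : Fin n, x ≠ y → w x y = ⊥ → w y x = ((b y x : ℤ) : WithBot ℤ))
    (V4 : ∀ x y : Fin n, x ≠ y → ∀ t s : ℤ, w x y = (t : WithBot ℤ) →
      w y x = (s : WithBot ℤ) → s = -1 - t)
    (m : ℕ) (hm : 5 ≤ m) (v : ℕ → Fin n)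
    (hvp : ∀ i, v (i + m) = v i)
    (hvinj : ∀ i j : ℕ, v i = v j → i % m = j % m)
    (ω : ℕ → ℤ) (hω : ∀ i, w (v i) (v (i+1)) = ((ω i : ℤ) : WithBot ℤ))
    (S : ℤ) (hS : S = ∑ j ∈ Finset.range m, ω j) (hS0 : 0 ≤ S)
    (hMin : ∀ i k : ℕ, 2 ≤ k → k + 2 ≤ m → ∀ x : ℤ, w (v (i+k)) (v i) = (x : WithBot ℤ) →
      (∑ j ∈ Finset.range k, ω (i+j)) + x ≤ -1) : False := by
  have hm0 : 0 < m := by omega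
  -- periodicity facts
  have hvper : ∀ q i, v (i + q * m) = v i := by
    intro q
    induction q with
    | zero => intro i; simp
    | succ q ih =>
      intro i
      have h : i + (q+1) * m = (i + q * m) + m := by ring
      rw [h, hvp, ih]
  have hvmod : ∀ i, v i = v (i % m) := by
    intro i
    conv_lhs => rw [show i = i % m + (i / m) * m by rw [Nat.mod_add_div' i m]]
    rw [hvper]
  have hvcong : ∀ i j, i % m = j % m → v i = v j := by
    intro i j h; rw [hvmod i, hvmod j, h]
  have hvne : ∀ (i p q : ℕ), p < m → q < m → p ≠ q → v (i + p) ≠ v (i + q) := by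
    intro i p q hp hq hpq hv
    have h1 := hvinj _ _ hv
    have h2 : p ≡ q [MOD m] := Nat.ModEq.add_left_cancel' i h1
    rw [Nat.ModEq, Nat.mod_eq_of_lt hp, Nat.mod_eq_of_lt hq] at h2
    exact hpq h2
  have hvm : v m = v 0 := by
    rw [show m = 0 + m by omega]; exact hvp 0
  have hωper : ∀ i, ω (i + m) = ω i := by
    intro i
    have h1 := hω (i + m)
    rw [show i + m + 1 = (i+1) + m by omega, hvp, hvp] at h1
    rw [hω i] at h1
    exact (WithBot.coe_inj.mp h1).symm
  set W : ℕ → ℕ → ℤ := fun i k => ∑ j ∈ Finset.range k, ω (i+j) with hWdef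
  have hMinW : ∀ i k : ℕ, 2 ≤ k → k + 2 ≤ m → ∀ x : ℤ,
      w (v (i+k)) (v i) = (x : WithBot ℤ) → W i k + x ≤ -1 := hMin
  have hWadd : ∀ i k k', W i (k + k') = W i k + W (i+k) k' := by
    intro i k k'
    show (∑ j ∈ Finset.range (k+k'), ω (i+j)) = _
    rw [Finset.sum_range_add]
    congr 1
    apply Finset.sum_congr rfl
    intro j _
    congr 1
    omega
  have hWm : ∀ i, W i m = S := by
    intro i
    induction i with
    | zero =>
      rw [hS]
      apply Finset.sum_congr rfl
      intro j _
      rw [Nat.zero_add]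
    | succ i ih =>
      have h1 : W i (1 + m) = W i 1 + W (i+1) m := hWadd i 1 m
      have h2 : W i (m + 1) = W i m + ω (i + m) := by
        simp only [hWdef]
        exact Finset.sum_range_succ (fun j => ω (i+j)) m
      have h3 : W i 1 = ω (i + 0) := by
        simp only [hWdef]
        exact Finset.sum_range_one (fun j => ω (i+j))
      rw [Nat.add_zero] at h3
      rw [show (1:ℕ) + m = m + 1 by omega] at h1
      rw [hωper i] at h2
      rw [h1, h3] at h2
      omega
  have hPcong : ∀ i j k, i % m = j % m → Pk w v i k → Pk w v j k := by
    intro i j k h hp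
    have h2 : (i + k) % m = (j + k) % m := Nat.ModEq.add_right k h
    show w (v j) (v (j+k)) ≠ ⊥
    rw [← hvcong i j h, ← hvcong (i+k) (j+k) h2]
    exact hp
  -- the chord dichotomy: a present chord is at its max, and the reverse is absent
  have hchord : ∀ i k, 2 ≤ k → k + 2 ≤ m → Pk w v i k →
      w (v i) (v (i+k)) = ((b (v i) (v (i+k)) : ℤ) : WithBot ℤ) ∧ w (v (i+k)) (v i) = ⊥ := by
    intro i k h2 hk2 hp
    have hne : v i ≠ v (i+k) := by
      have := hvne i 0 k (by omega) (by omega) (by omega)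
      simpa using this
    cases hrev : w (v (i+k)) (v i) with
    | bot => exact ⟨V2 _ _ hne.symm hrev, rfl⟩
    | coe s =>
      exfalso
      obtain ⟨t, ht⟩ : ∃ t : ℤ, w (v i) (v (i+k)) = (t : WithBot ℤ) := by
        cases hfor : w (v i) (v (i+k)) with
        | bot => exact absurd hfor hp
        | coe t => exact ⟨t, rfl⟩
      have e1 := hMinW i k h2 hk2 s hrev
      have e2 : W (i+k) (m-k) + t ≤ -1 := by
        apply hMinW (i+k) (m-k) (by omega) (by omega) t
        rw [show i + k + (m - k) = i + m by omega, hvp]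
        exact ht
      have e3 : W i k + W (i+k) (m-k) = S := by
        rw [← hWadd, show k + (m-k) = m by omega, hWm]
      have e4 := V4 _ _ hne t s ht hrev
      linarith
  -- quantitative bounds
  have hLA : ∀ i k, 2 ≤ k → k + 2 ≤ m → Pk w v i k →
      b (v i) (v (i+k)) ≤ W i k - S - 1 ∧ S + 1 - W i k ≤ b (v (i+k)) (v i) := by
    intro i k h2 hk2 hp
    have hne : v i ≠ v (i+k) := by
      have := hvne i 0 k (by omega) (by omega) (by omega)
      simpa using this
    obtain ⟨hval, _⟩ := hchord i k h2 hk2 hp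
    have e2 : W (i+k) (m-k) + b (v i) (v (i+k)) ≤ -1 := by
      apply hMinW (i+k) (m-k) (by omega) (by omega)
      rw [show i + k + (m - k) = i + m by omega, hvp]
      exact hval
    have e3 : W i k + W (i+k) (m-k) = S := by
      rw [← hWadd, show k + (m-k) = m by omega, hWm]
    have e5 := V1 _ _ hne _ hval
    exact ⟨by linarith, by linarith [e5.2]⟩
  have hLB : ∀ i k, 2 ≤ k → k + 2 ≤ m → ¬ Pk w v i k →
      b (v (i+k)) (v i) ≤ -(W i k) - 1 ∧ W i k + 1 ≤ b (v i) (v (i+k)) := by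
    intro i k h2 hk2 hp
    have hne : v i ≠ v (i+k) := by
      have := hvne i 0 k (by omega) (by omega) (by omega)
      simpa using this
    have hbot : w (v i) (v (i+k)) = ⊥ := not_not.mp hp
    have hval := V2 _ _ hne hbot
    have e1 := hMinW i k h2 hk2 _ hval
    have e5 := V1 _ _ hne.symm _ hval
    exact ⟨by linarith, by linarith [e5.2]⟩
  have hLE : ∀ i, ω i ≤ b (v i) (v (i+1)) ∧ -(ω i) ≤ b (v (i+1)) (v i) := by
    intro i
    have hne : v i ≠ v (i+1) := by
      have := hvne i 0 1 (by omega) (by omega) (by omega)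
      simpa using this
    exact V1 _ _ hne _ (hω i)
  -- local propagation rules
  have R1 : ∀ i, ¬ Pk w v i 2 → ¬ Pk w v i 3 := by
    intro i h2 h3
    have hb1 := (hLB i 2 (by omega) (by omega) h2).1
    have hb2 := (hLA i 3 (by omega) (by omega) h3).1
    have hne1 : v (i+2) ≠ v (i+0) := hvne i 2 0 (by omega) (by omega) (by omega)
    have hne2 : v (i+0) ≠ v (i+3) := hvne i 0 3 (by omega) (by omega) (by omega)
    have hne3 : v (i+2) ≠ v (i+3) := hvne i 2 3 (by omega) (by omega) (by omega)
    have htr := htri (v (i+2)) (v (i+0)) (v (i+3)) hne1 hne2 hne3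
    simp only [Nat.add_zero] at htr
    have hle : ω (i+2) ≤ b (v (i+2)) (v (i+3)) := (hLE (i+2)).1
    have hW3 : W i 3 = W i 2 + ω (i+2) := by
      simp only [hWdef]
      exact Finset.sum_range_succ (fun j => ω (i+j)) 2
    linarith
  have R2 : ∀ i, Pk w v (i+1) 2 → Pk w v i 3 := by
    intro i hp
    by_contra h3
    have hb1 : b (v (i+1)) (v (i+3)) ≤ W (i+1) 2 - S - 1 :=
      (hLA (i+1) 2 (by omega) (by omega) hp).1
    have hb2 := (hLB i 3 (by omega) (by omega) h3).1
    have hne1 : v (i+1) ≠ v (i+3) := hvne i 1 3 (by omega) (by omega) (by omega)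
    have hne2 : v (i+3) ≠ v (i+0) := hvne i 3 0 (by omega) (by omega) (by omega)
    have hne3 : v (i+1) ≠ v (i+0) := hvne i 1 0 (by omega) (by omega) (by omega)
    have htr := htri (v (i+1)) (v (i+3)) (v (i+0)) hne1 hne2 hne3
    simp only [Nat.add_zero] at htr
    have hle : -(ω i) ≤ b (v (i+1)) (v i) := (hLE i).2
    have hWr : W i 3 = ω i + W (i+1) 2 := by
      have h1 := hWadd i 1 2
      have h2 : W i 1 = ω (i + 0) := by
        simp only [hWdef]
        exact Finset.sum_range_one (fun j => ω (i+j))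
      rw [Nat.add_zero] at h2
      rw [h2] at h1
      exact h1
    linarith
  have T : ∀ i k, 2 ≤ k → k + 4 ≤ m → Pk w v i k → Pk w v (i+k) 2 → Pk w v i (k+2) := by
    intro i k h2 hk4 hp1 hp2
    by_contra hn
    have hb1 := (hLA i k h2 (by omega) hp1).1
    have hb2 : b (v (i+k)) (v (i+(k+2))) ≤ W (i+k) 2 - S - 1 :=
      (hLA (i+k) 2 (by omega) (by omega) hp2).1
    have hb3 := (hLB i (k+2) (by omega) (by omega) hn).2
    have hne1 : v (i+0) ≠ v (i+k) := hvne i 0 k (by omega) (by omega) (by omega)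
    have hne2 : v (i+k) ≠ v (i+(k+2)) := hvne i k (k+2) (by omega) (by omega) (by omega)
    have hne3 : v (i+0) ≠ v (i+(k+2)) := hvne i 0 (k+2) (by omega) (by omega) (by omega)
    have htr := htri (v (i+0)) (v (i+k)) (v (i+(k+2))) hne1 hne2 hne3
    simp only [Nat.add_zero] at htr
    have hWa := hWadd i k 2
    linarith
  have T' : ∀ i k, 2 ≤ k → k + 4 ≤ m → ¬ Pk w v i k → ¬ Pk w v (i+k) 2 → ¬ Pk w v i (k+2) := by
    intro i k h2 hk4 hn1 hn2 hp
    have hb1 := (hLB i k h2 (by omega) hn1).1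
    have hb2 : b (v (i+(k+2))) (v (i+k)) ≤ -(W (i+k) 2) - 1 :=
      (hLB (i+k) 2 (by omega) (by omega) hn2).1
    have hb3 := (hLA i (k+2) (by omega) (by omega) hp).2
    have hne1 : v (i+(k+2)) ≠ v (i+k) := hvne i (k+2) k (by omega) (by omega) (by omega)
    have hne2 : v (i+k) ≠ v (i+0) := hvne i k 0 (by omega) (by omega) (by omega)
    have hne3 : v (i+(k+2)) ≠ v (i+0) := hvne i (k+2) 0 (by omega) (by omega) (by omega)
    have htr := htri (v (i+(k+2))) (v (i+k)) (v (i+0)) hne1 hne2 hne3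
    simp only [Nat.add_zero] at htr
    have hWa := hWadd i k 2
    linarith
  have step : ∀ i, Pk w v (i+1) 2 → Pk w v i 2 ∧ Pk w v i 3 := by
    intro i h
    have h3 := R2 i h
    refine ⟨?_, h3⟩
    by_contra h2
    exact R1 i h2 h3
  have descend : ∀ t i, Pk w v (i + 1 + t) 2 → Pk w v i 2 ∧ Pk w v i 3 := by
    intro t
    induction t with
    | zero => intro i h; exact step i h
    | succ t ih =>
      intro i h
      rw [show i + 1 + (t+1) = (i+1) + 1 + t by omega] at h
      exact step i (ih (i+1) h).1
  by_cases hex : ∃ i0, Pk w v i0 2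
  · obtain ⟨i0, hi0⟩ := hex
    have hall : ∀ i, Pk w v i 2 ∧ Pk w v i 3 := by
      intro i
      set r := (i+1) % m with hr
      have hrm : r < m := Nat.mod_lt _ hm0
      have h1 : (i + 1) ≡ r [MOD m] := (Nat.mod_modEq (i+1) m).symm
      have h2 := h1.add_right (m - r + i0)
      have h3 : r + (m - r + i0) = i0 + m := by omega
      have h4 : (i0 + m) ≡ i0 [MOD m] := Nat.add_mod_right i0 m
      have key : (i + 1 + (m - r + i0)) % m = i0 % m := h2.trans (h3 ▸ h4)
      exact descend (m - r + i0) i (hPcong i0 (i + 1 + (m - r + i0)) 2 key.symm hi0)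
    have upA : ∀ k, 2 ≤ k → k + 2 ≤ m → ∀ i, Pk w v i k := by
      intro k
      induction k using Nat.strong_induction_on with
      | _ k ih =>
        intro h2 hk2 i
        rcases Nat.lt_or_ge k 4 with h4 | h4
        · interval_cases k
          · exact (hall i).1
          · exact (hall i).2
        · obtain ⟨k', rfl⟩ : ∃ k', k = k' + 2 := ⟨k - 2, by omega⟩
          exact T i k' (by omega) (by omega)
            (ih k' (by omega) (by omega) (by omega) i) ((hall (i + k')).1)
    have h1 : Pk w v 0 (m-2) := upA (m-2) (by omega) (by omega) 0
    have h2 := (hchord (m-2) 2 (by omega) (by omega) (hall (m-2)).1).2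
    rw [show m - 2 + 2 = m by omega, hvm] at h2
    apply h1
    show w (v 0) (v (0 + (m-2))) = ⊥
    rw [Nat.zero_add]
    exact h2
  · push_neg at hex
    have hno3 : ∀ i, ¬ Pk w v i 3 := fun i => R1 i (hex i)
    have upB : ∀ k, 2 ≤ k → k + 2 ≤ m → ∀ i, ¬ Pk w v i k := by
      intro k
      induction k using Nat.strong_induction_on with
      | _ k ih =>
        intro h2 hk2 i
        rcases Nat.lt_or_ge k 4 with h4 | h4
        · interval_cases k
          · exact hex i
          · exact hno3 i
        · obtain ⟨k', rfl⟩ : ∃ k', k = k' + 2 := ⟨k - 2, by omega⟩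
          exact T' i k' (by omega) (by omega)
            (ih k' (by omega) (by omega) (by omega) i) (hex (i + k'))
    have h1 : ¬ Pk w v 0 (m-2) := upB (m-2) (by omega) (by omega) 0
    have h2 : w (v (m-2)) (v 0) = ⊥ := by
      have h3 : w (v (m-2)) (v (m-2+2)) = ⊥ := not_not.mp (hex (m-2))
      rwa [show m - 2 + 2 = m by omega, hvm] at h3
    have h4 : w (v 0) (v (m-2)) = ⊥ := by
      have h5 : w (v 0) (v (0 + (m-2))) = ⊥ := not_not.mp h1
      rwa [Nat.zero_add] at h5
    have hne : v 0 ≠ v (m-2) := by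
      have := hvne 0 0 (m-2) (by omega) (by omega) (by omega)
      simpa using this
    have h6 := V2 _ _ hne h4
    rw [h2] at h6
    exact absurd h6.symm WithBot.coe_ne_bot

end Stmt7Aux

theorem stmt7 (n : ℕ) (a b : Fin n → Fin n → ℤ)
    (hab : ∀ i j : Fin n, i < j → a i j ≤ b i j)
    (hsym : ∀ i j : Fin n, i < j → a j i = -(b i j) ∧ b j i = -(a i j))
    (htri : ∀ i j k : Fin n, i ≠ j → j ≠ k → i ≠ k → b i k ≤ b i j + b j k + 1)
    (w : Fin n → Fin n → WithBot ℤ) (hw : ValidW a b w) :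
    MAcyclic w ↔ ∀ c : List (Fin n), c.length ≤ 4 → ¬ MAscending w c := by
  classical
  obtain ⟨hloop, hpair⟩ := hw
  constructor
  · intro h c _
    exact h c
  · intro hshort c0 hasc0
    -- a minimal-length ascending cycle
    have hex0 : ∃ L : ℕ, ∃ c : List (Fin n), c.length = L ∧ MAscending w c :=
      ⟨c0.length, c0, rfl, hasc0⟩
    obtain ⟨c, hcl, hasc⟩ := Nat.find_spec hex0
    have hmin : ∀ c' : List (Fin n), c'.length < c.length → ¬ MAscending w c' := by
      intro c' hl ha
      rw [hcl] at hl
      exact Nat.find_min hex0 hl ⟨c', rfl, ha⟩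
    have hm5 : 5 ≤ c.length := by
      by_contra hlt
      exact hshort c (by omega) hasc
    obtain ⟨⟨hlen2, hnodup, hedges⟩, hwt⟩ := hasc
    -- validity-derived facts
    have haneg : ∀ x y : Fin n, x ≠ y → a x y = -(b y x) := by
      intro x y hxy
      rcases lt_or_gt_of_ne hxy with h | h
      · have h1 := (hsym x y h).2
        omega
      · exact (hsym y x h).1
    have habo : ∀ x y : Fin n, x ≠ y → a x y ≤ b x y := by
      intro x y hxy
      rcases lt_or_gt_of_ne hxy with h | h
      · exact hab x y h
      · have h1 := hab y x h
        have h2 := (hsym y x h).1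
        have h3 := (hsym y x h).2
        omega
    have V2 : ∀ x y : Fin n, x ≠ y → w x y = ⊥ → w y x = ((b y x : ℤ) : WithBot ℤ) :=
      fun x y hxy h => ((hpair x y hxy).2.1).mp h
    have V4 : ∀ x y : Fin n, x ≠ y → ∀ t s : ℤ, w x y = (t : WithBot ℤ) →
        w y x = (s : WithBot ℤ) → s = -1 - t :=
      fun x y hxy t s ht hs => (hpair x y hxy).2.2 t s ht hs
    have V1 : ∀ x y : Fin n, x ≠ y → ∀ t : ℤ, w x y = (t : WithBot ℤ) →
        t ≤ b x y ∧ -t ≤ b y x := by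
      intro x y hxy t ht
      have hb := (hpair x y hxy).1 (by rw [ht]; exact WithBot.coe_ne_bot)
      rw [ht] at hb
      have hb1 : t ≤ b x y := WithBot.coe_le_coe.mp hb.2
      refine ⟨hb1, ?_⟩
      cases hyx : w y x with
      | bot =>
        have h1 := V2 y x hxy.symm hyx
        rw [ht] at h1
        have h2 : t = b x y := WithBot.coe_inj.mp h1
        have h3 := haneg y x hxy.symm
        have h4 := habo y x hxy.symm
        omega
      | coe s =>
        have hs := V4 x y hxy t s ht hyx
        have hb2 := (hpair y x hxy.symm).1 (by rw [hyx]; exact WithBot.coe_ne_bot)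
        rw [hyx] at hb2
        have hsb : s ≤ b y x := WithBot.coe_le_coe.mp hb2.2
        have hne : s ≠ b y x := by
          intro he
          have h5 : w y x = ((b y x : ℤ) : WithBot ℤ) := by rw [hyx, he]
          have h6 := ((hpair x y hxy).2.1).mpr h5
          rw [ht] at h6
          exact WithBot.coe_ne_bot h6
        omega
    -- parametrize the cycle
    have hm0 : 0 < c.length := by omega
    set d : Fin n := c.get ⟨0, hm0⟩ with hd
    set v : ℕ → Fin n := fun i => c.getD (i % c.length) d with hv
    have hvp : ∀ i, v (i + c.length) = v i := by
      intro i
      simp only [hv]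
      rw [Nat.add_mod_right]
    have hvinj : ∀ i j : ℕ, v i = v j → i % c.length = j % c.length := by
      intro i j h
      simp only [hv] at h
      rw [List.getD_eq_getElem c d (Nat.mod_lt _ hm0),
        List.getD_eq_getElem c d (Nat.mod_lt _ hm0)] at h
      exact (List.Nodup.getElem_inj_iff hnodup).mp h
    have hEdge : ∀ i : ℕ, w (v i) (v (i+1)) ≠ ⊥ := by
      intro i
      have h1 : (i + 1) % c.length = (i % c.length + 1) % c.length := by
        conv_lhs => rw [Nat.add_mod]
        rw [Nat.mod_eq_of_lt (show 1 < c.length by omega)]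
      have hmem := stmt7_mem_cpairs c d (i % c.length) (Nat.mod_lt _ hm0)
      have h2 := hedges _ hmem
      simp only [hv]
      rw [h1]
      exact h2
    set ω : ℕ → ℤ := fun i => (w (v i) (v (i+1))).unbotD 0 with hωdef
    have hω : ∀ i, w (v i) (v (i+1)) = ((ω i : ℤ) : WithBot ℤ) := by
      intro i
      cases hc : w (v i) (v (i+1)) with
      | bot => exact absurd hc (hEdge i)
      | coe t =>
        simp only [hωdef]
        rw [hc]
        simp
    set S : ℤ := ∑ j ∈ Finset.range c.length, ω j with hSdef
    have hwt' : cycWeight w c = ((S : ℤ) : WithBot ℤ) := by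
      rw [stmt7_cycWeight_eq w c d]
      have he : ∀ i ∈ Finset.range c.length,
          w (c.getD i d) (c.getD ((i+1) % c.length) d) = ((ω i : ℤ) : WithBot ℤ) := by
        intro i hi
        rw [Finset.mem_range] at hi
        have h2 : c.getD i d = v i := by
          simp only [hv]
          rw [Nat.mod_eq_of_lt hi]
        have h3 : c.getD ((i+1) % c.length) d = v (i+1) := by
          simp only [hv]
        rw [h2, h3, hω i]
      rw [Finset.sum_congr rfl he]
      exact stmt7_coe_sum ω c.length
    have hS0 : (0:ℤ) ≤ S := by
      rw [hwt'] at hwt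
      exact_mod_cast hwt
    have hMin : ∀ i k : ℕ, 2 ≤ k → k + 2 ≤ c.length → ∀ x : ℤ,
        w (v (i+k)) (v i) = (x : WithBot ℤ) →
        (∑ j ∈ Finset.range k, ω (i+j)) + x ≤ -1 := by
      intro i k h2 hk2 x hx
      set arc : List (Fin n) := (List.range (k+1)).map (fun j => v (i+j)) with harc
      have hal : arc.length = k + 1 := by simp [harc]
      have hidx : ∀ t : ℕ, t < k + 1 → arc.getD t d = v (i+t) := by
        intro t ht
        rw [List.getD_eq_getElem arc d (by rw [hal]; omega)]
        simp [harc]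
      have hnd : arc.Nodup := by
        apply List.Nodup.map_on ?_ List.nodup_range
        intro x1 hx1 x2 hx2 he
        rw [List.mem_range] at hx1 hx2
        have h1 := hvinj _ _ he
        have h2 : x1 ≡ x2 [MOD c.length] := Nat.ModEq.add_left_cancel' i h1
        rw [Nat.ModEq, Nat.mod_eq_of_lt (by omega), Nat.mod_eq_of_lt (by omega)] at h2
        exact h2
      have hcyc : IsCycle w arc := by
        refine ⟨by rw [hal]; omega, hnd, ?_⟩
        intro p hp
        obtain ⟨t, ht, hpe⟩ := List.mem_iff_getElem.mp hp
        rw [stmt7_getElem_cpairs arc d t ht] at hpe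
        have ht' : t < k + 1 := by
          rw [stmt7_length_cpairs, hal] at ht
          exact ht
        rw [hal] at hpe
        by_cases htk : t < k
        · rw [Nat.mod_eq_of_lt (show t + 1 < k + 1 by omega)] at hpe
          rw [← hpe]
          simp only
          rw [hidx t (by omega), hidx (t+1) (by omega)]
          rw [show i + (t+1) = (i+t) + 1 by omega]
          exact hEdge (i+t)
        · have htk' : t = k := by omega
          rw [htk'] at hpe
          rw [Nat.mod_self] at hpe
          rw [← hpe]
          simp only
          rw [hidx k (by omega), hidx 0 (by omega), Nat.add_zero]
          rw [hx]
          exact WithBot.coe_ne_bot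
      have hcw : cycWeight w arc
          = (((∑ j ∈ Finset.range k, ω (i+j)) + x : ℤ) : WithBot ℤ) := by
        rw [stmt7_cycWeight_eq w arc d, hal, Finset.sum_range_succ]
        have hlast : w (arc.getD k d) (arc.getD ((k+1) % (k+1)) d) = (x : WithBot ℤ) := by
          rw [Nat.mod_self, hidx k (by omega), hidx 0 (by omega), Nat.add_zero, hx]
        have hrest : ∀ t ∈ Finset.range k,
            w (arc.getD t d) (arc.getD ((t+1) % (k+1)) d) = ((ω (i+t) : ℤ) : WithBot ℤ) := by
          intro t ht
          rw [Finset.mem_range] at ht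
          rw [Nat.mod_eq_of_lt (by omega), hidx t (by omega), hidx (t+1) (by omega)]
          rw [show i + (t+1) = (i+t) + 1 by omega]
          exact hω (i+t)
        rw [Finset.sum_congr rfl hrest, hlast, stmt7_coe_sum, WithBot.coe_add]
      have hnasc : ¬ MAscending w arc := hmin arc (by rw [hal]; omega)
      have hn0 : ¬ (0 ≤ cycWeight w arc) := fun h0 => hnasc ⟨hcyc, h0⟩
      rw [hcw] at hn0
      have hn1 : ¬ ((0:ℤ) ≤ (∑ j ∈ Finset.range k, ω (i+j)) + x) := by
        intro h0
        exact hn0 (by exact_mod_cast h0)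
      omega
    exact stmt7core b w htri V1 V2 V4 c.length hm5 v hvp hvinj ω hω S hSdef hS0 hMin
end

section
/- Let a, b ≥ 0 be integers with a + b ≥ 2. Then a valid weight function of the truncated affine arrangement 𝒜^{a,b}_{n−1} is m-acyclic (has no m-ascending directed cycle) if and only if it contains no m-ascending directed cycle of length at most four. -/
/-- Lower bounds of the truncated affine arrangement `A^{a,b}_{n-1}`:
`α(i,j) = 1 - a` for `i < j`, extended by `α(j,i) = -β(i,j) = 1 - b`. -/
def trAlpha {n : ℕ} (a b : ℤ) (u v : Fin n) : ℤ := if u < v then 1 - a else 1 - b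

/-- Upper bounds of the truncated affine arrangement `A^{a,b}_{n-1}`:
`β(i,j) = b - 1` for `i < j`, extended by `β(j,i) = -α(i,j) = a - 1`. -/
def trBeta {n : ℕ} (a b : ℤ) (u v : Fin n) : ℤ := if u < v then b - 1 else a - 1

section Aux
variable {n : ℕ}

lemma cpairs_length (l : List (Fin n)) : (cpairs l).length = l.length := by
  simp [cpairs]

lemma cpairs_getElem (l : List (Fin n)) (i : ℕ) (hi : i < l.length) :
    (cpairs l)[i]'((cpairs_length l).symm ▸ hi) =
      (l[i], l[(i+1) % l.length]'(Nat.mod_lt _ (by omega))) := by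
  simp [cpairs, List.getElem_zip, List.getElem_rotate]

lemma sum_map_eq {M : Type*} [AddCommMonoid M] (l : List (Fin n × Fin n))
    (g : Fin n × Fin n → M) (dd : Fin n × Fin n) :
    (l.map g).sum = ∑ i ∈ Finset.range l.length, g (l.getD i dd) := by
  induction l with
  | nil => simp
  | cons a t ih =>
      simp only [List.map_cons, List.sum_cons, List.length_cons, Finset.sum_range_succ',
        List.getD_cons_succ, List.getD_cons_zero, ih]
      exact (add_comm _ _)

lemma cycWeight_eq (w : Fin n → Fin n → WithBot ℤ) (l : List (Fin n)) (d : Fin n) :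
    cycWeight w l = ∑ i ∈ Finset.range l.length,
      w (l.getD i d) (l.getD ((i+1) % l.length) d) := by
  unfold cycWeight
  rw [sum_map_eq _ _ (d, d), cpairs_length]
  refine Finset.sum_congr rfl fun i hi => ?_
  rw [Finset.mem_range] at hi
  rw [List.getD_eq_getElem _ _ ((cpairs_length l).symm ▸ hi), cpairs_getElem l i hi,
    List.getD_eq_getElem _ _ hi, List.getD_eq_getElem _ _ (Nat.mod_lt _ (by omega))]

lemma coe_sum (s : Finset ℕ) (g : ℕ → ℤ) :
    ((∑ i ∈ s, g i : ℤ) : WithBot ℤ) = ∑ i ∈ s, ((g i : ℤ) : WithBot ℤ) := by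
  classical
  induction s using Finset.induction_on with
  | empty => simp
  | insert _ _ h ih => rw [Finset.sum_insert h, Finset.sum_insert h, WithBot.coe_add, ih]

lemma coe_unbot' {x : WithBot ℤ} (h : x ≠ ⊥) : ((x.unbotD 0 : ℤ) : WithBot ℤ) = x := by
  cases x with
  | bot => exact absurd rfl h
  | coe a => rfl

lemma cycle_edge {w : Fin n → Fin n → WithBot ℤ} {l : List (Fin n)}
    (h : IsCycle w l) (d : Fin n) (i : ℕ) (hi : i < l.length) :
    w (l.getD i d) (l.getD ((i+1) % l.length) d) ≠ ⊥ := by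
  have hmem : (cpairs l)[i]'((cpairs_length l).symm ▸ hi) ∈ cpairs l :=
    List.getElem_mem _
  have h2 := h.2.2 _ hmem
  rw [cpairs_getElem l i hi] at h2
  rw [List.getD_eq_getElem _ _ hi, List.getD_eq_getElem _ _ (Nat.mod_lt _ (by omega))]
  exact h2

lemma mk_isCycle (w : Fin n → Fin n → WithBot ℤ) (v : ℕ → Fin n) (k : ℕ) (hk : 2 ≤ k)
    (hinj : ∀ s t, s < k → t < k → v s = v t → s = t)
    (hedge : ∀ t, t + 1 < k → w (v t) (v (t+1)) ≠ ⊥)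
    (hlast : w (v (k-1)) (v 0) ≠ ⊥) :
    IsCycle w ((List.range k).map v) := by
  have hlen : ((List.range k).map v).length = k := by simp
  refine ⟨by omega, ?_, ?_⟩
  · exact List.Nodup.map_on
      (fun x hx y hy hxy => hinj x y (by simpa using hx) (by simpa using hy) hxy)
      List.nodup_range
  · intro p hp
    rw [List.mem_iff_getElem] at hp
    obtain ⟨i, hi, rfl⟩ := hp
    rw [cpairs_length, hlen] at hi
    rw [cpairs_getElem _ i (hlen.symm ▸ hi)]
    have h1 : ∀ j (hj : j < k), ((List.range k).map v)[j]'(hlen.symm ▸ hj) = v j := by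
      intro j hj; simp
    simp only [hlen]
    rw [h1 i hi, h1 ((i+1) % k) (Nat.mod_lt _ (by omega))]
    rcases Nat.lt_or_ge (i+1) k with h | h
    · rw [Nat.mod_eq_of_lt h]; exact hedge i h
    · have hik : i = k - 1 := by omega
      subst hik
      have hz : (k - 1 + 1) % k = 0 := by
        have hh : k - 1 + 1 = k := by omega
        rw [hh, Nat.mod_self]
      rw [hz]; exact hlast

lemma mk_cycWeight (w : Fin n → Fin n → WithBot ℤ) (v : ℕ → Fin n) (k : ℕ) (hk : 2 ≤ k) :
    cycWeight w ((List.range k).map v) =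
      ∑ i ∈ Finset.range k, w (v i) (v ((i+1) % k)) := by
  have hlen : ((List.range k).map v).length = k := by simp
  rw [cycWeight_eq w _ (v 0)]
  rw [hlen]
  refine Finset.sum_congr rfl fun i hi => ?_
  rw [Finset.mem_range] at hi
  rw [List.getD_eq_getElem _ _ (hlen.symm ▸ hi),
    List.getD_eq_getElem _ _ (hlen.symm ▸ Nat.mod_lt _ (show 0 < k by omega) :
      (i+1) % k < ((List.range k).map v).length)]
  simp

/-- Integer value of a finite weight. -/
def fInt {n : ℕ} (w : Fin n → Fin n → WithBot ℤ) (x y : Fin n) : ℤ := (w x y).unbotD 0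

/-- Edge weights along the periodic extension `u`. -/
def eseq {n : ℕ} (w : Fin n → Fin n → WithBot ℤ) (u : ℕ → Fin n) (i : ℕ) : ℤ :=
  fInt w (u i) (u (i+1))

/-- Window sums. -/
def sig {n : ℕ} (w : Fin n → Fin n → WithBot ℤ) (u : ℕ → Fin n) (p g : ℕ) : ℤ :=
  ∑ t ∈ Finset.range g, eseq w u (p+t)

lemma sum_range_add' (F : ℕ → ℤ) (c d : ℕ) :
    ∑ t ∈ Finset.range (c+d), F t
      = ∑ t ∈ Finset.range c, F t + ∑ t ∈ Finset.range d, F (c+t) :=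
  Finset.sum_range_add F c d

lemma tr_sum (a b : ℤ) (x y : Fin n) (hxy : x ≠ y) :
    trBeta a b x y + trBeta a b y x = a + b - 2 := by
  have h1 : x.val ≠ y.val := fun h => hxy (Fin.ext h)
  simp only [trBeta, Fin.lt_def]
  split_ifs <;> omega

lemma harith1 (a b : ℤ) (ha : 0 ≤ a) (hb : 0 ≤ b) (x y z : Fin n)
    (hxy : x ≠ y) (hyz : y ≠ z) (hxz : x ≠ z) :
    trBeta a b y z < trBeta a b x z + trBeta a b y x + 2 := by
  have h1 : x.val ≠ y.val := fun h => hxy (Fin.ext h)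
  have h2 : y.val ≠ z.val := fun h => hyz (Fin.ext h)
  have h3 : x.val ≠ z.val := fun h => hxz (Fin.ext h)
  simp only [trBeta, Fin.lt_def]
  split_ifs <;> omega

lemma harith2 (a b : ℤ) (ha : 0 ≤ a) (hb : 0 ≤ b) (x y z : Fin n)
    (hxy : x ≠ y) (hyz : y ≠ z) (hxz : x ≠ z) :
    0 < trAlpha a b y z + trBeta a b z x + trBeta a b x y + 2 := by
  have h1 : x.val ≠ y.val := fun h => hxy (Fin.ext h)
  have h2 : y.val ≠ z.val := fun h => hyz (Fin.ext h)
  have h3 : x.val ≠ z.val := fun h => hxz (Fin.ext h)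
  simp only [trAlpha, trBeta, Fin.lt_def]
  split_ifs <;> omega

lemma no_big (a b : ℤ) (ha : 0 ≤ a) (hb : 0 ≤ b) (hab : 2 ≤ a + b)
    (w : Fin n → Fin n → WithBot ℤ) (hw : ValidW (trAlpha a b) (trBeta a b) w)
    (m : ℕ) (hm5 : 5 ≤ m) (u : ℕ → Fin n)
    (hper : ∀ i, u (i+m) = u i)
    (hinjm : ∀ s t, s < m → t < m → u s = u t → s = t)
    (hedge : ∀ i, w (u i) (u (i+1)) ≠ ⊥)
    (hmin : ∀ l : List (Fin n), MAscending w l → m ≤ l.length)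
    (hS : 0 ≤ ∑ i ∈ Finset.range m, eseq w u i) : False := by
  have hmod : ∀ i, u i = u (i % m) := by
    intro i
    induction i using Nat.strong_induction_on with
    | _ i ih =>
      rcases Nat.lt_or_ge i m with h | h
      · rw [Nat.mod_eq_of_lt h]
      · have h1 : i = (i - m) + m := by omega
        rw [h1, hper, Nat.add_mod_right]
        exact ih _ (by omega)
  have hinj' : ∀ i j, u i = u j → i % m = j % m := by
    intro i j hij
    rw [hmod i, hmod j] at hij
    exact hinjm _ _ (Nat.mod_lt _ (by omega)) (Nat.mod_lt _ (by omega)) hij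
  have hne : ∀ p g, 0 < g → g < m → u p ≠ u (p+g) := by
    intro p g h0 hg hc
    have h1 : (p : ℕ) ≡ p + g [MOD m] := hinj' _ _ hc
    have h2 : m ∣ p + g - p := (Nat.modEq_iff_dvd' (Nat.le_add_right p g)).mp h1
    rw [show p + g - p = g from by omega] at h2
    exact absurd (Nat.le_of_dvd h0 h2) (by omega)
  have heper : ∀ i, eseq w u (i+m) = eseq w u i := by
    intro i
    unfold eseq fInt
    rw [hper i, show i+m+1 = (i+1)+m from by omega, hper]
  have hshift : ∀ p, (∑ t ∈ Finset.range m, eseq w u (p+t))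
      = ∑ i ∈ Finset.range m, eseq w u i := by
    intro p
    induction p with
    | zero => simp
    | succ p ih =>
        rw [← ih]
        have hm1 : m = (m-1)+1 := by omega
        rw [hm1]
        conv_lhs => rw [Finset.sum_range_succ]
        conv_rhs => rw [Finset.sum_range_succ']
        rw [show p + 1 + (m-1) = p + (m-1) + 1 from by omega]
        rw [show p + (m-1) + 1 = (p + 0) + (m - 1 + 1) from by omega]
        rw [show m - 1 + 1 = m from by omega, heper]
        congr 1
        refine Finset.sum_congr rfl fun t _ => ?_
        rw [show p + 1 + t = p + (t+1) from by omega]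
  have hsplit : ∀ p g, g ≤ m → sig w u p g + sig w u (p+g) (m-g)
      = ∑ i ∈ Finset.range m, eseq w u i := by
    intro p g hg
    have h1 := sum_range_add' (fun t => eseq w u (p+t)) g (m-g)
    rw [show g + (m-g) = m from by omega] at h1
    rw [hshift p] at h1
    unfold sig
    rw [h1]
    congr 1
    refine Finset.sum_congr rfl fun t _ => ?_
    rw [show p + g + t = p + (g + t) from by omega]
  have key : ∀ p g, 1 ≤ g → g + 1 < m → w (u (p+g)) (u p) ≠ ⊥ →
      sig w u p g + fInt w (u (p+g)) (u p) ≤ -1 := by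
    intro p g h1 h2 hbot
    set v : ℕ → Fin n := fun t => u (p+t) with hv
    have hvinj : ∀ s t, s < g+1 → t < g+1 → v s = v t → s = t := by
      intro s t hs ht hst
      have h4 : (p + s) % m = (p + t) % m := hinj' _ _ hst
      have h5 : s ≡ t [MOD m] := Nat.ModEq.add_left_cancel' p h4
      have h6 : s % m = t % m := h5
      rwa [Nat.mod_eq_of_lt (by omega), Nat.mod_eq_of_lt (by omega)] at h6
    have hvedge : ∀ t, t + 1 < g+1 → w (v t) (v (t+1)) ≠ ⊥ := by
      intro t _
      exact hedge (p+t)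
    have hvlast : w (v (g+1-1)) (v 0) ≠ ⊥ := hbot
    have hic := mk_isCycle w v (g+1) (by omega) hvinj hvedge hvlast
    have hwt := mk_cycWeight w v (g+1) (by omega)
    have hnotasc : ¬ MAscending w ((List.range (g+1)).map v) := by
      intro hA
      have hl := hmin _ hA
      rw [List.length_map, List.length_range] at hl
      omega
    have hwle : ¬ (0 ≤ cycWeight w ((List.range (g+1)).map v)) :=
      fun hh => hnotasc ⟨hic, hh⟩
    have hcoe : cycWeight w ((List.range (g+1)).map v)
        = ((sig w u p g + fInt w (u (p+g)) (u p) : ℤ) : WithBot ℤ) := by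
      rw [hwt, Finset.sum_range_succ]
      have hterm : ∀ i ∈ Finset.range g,
          w (v i) (v ((i+1) % (g+1))) = ((eseq w u (p+i) : ℤ) : WithBot ℤ) := by
        intro i hi
        rw [Finset.mem_range] at hi
        rw [Nat.mod_eq_of_lt (by omega)]
        exact (coe_unbot' (hedge (p+i))).symm
      rw [Finset.sum_congr rfl hterm, Nat.mod_self]
      rw [show w (v g) (v 0) = ((fInt w (u (p+g)) (u p) : ℤ) : WithBot ℤ) from
        (coe_unbot' hbot).symm]
      rw [← coe_sum, ← WithBot.coe_add]
      rfl
    rw [hcoe] at hwle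
    rw [← WithBot.coe_zero, WithBot.coe_le_coe] at hwle
    omega
  -- chord direction facts
  have hfwd_or : ∀ p g, 0 < g → g < m →
      (w (u p) (u (p+g)) ≠ ⊥ ∨ w (u (p+g)) (u p) ≠ ⊥) := by
    intro p g h0 hg
    by_cases hbot : w (u p) (u (p+g)) = ⊥
    · right
      have hiff := (hw.2 (u p) (u (p+g)) (hne p g h0 hg)).2.1
      rw [hiff.mp hbot]
      exact WithBot.coe_ne_bot
    · left; exact hbot
  have hnotboth : ∀ p g, 2 ≤ g → g ≤ m - 2 →
      ¬(w (u p) (u (p+g)) ≠ ⊥ ∧ w (u (p+g)) (u p) ≠ ⊥) := by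
    rintro p g h2 hg ⟨hf, hbk⟩
    have k1 := key p g (by omega) (by omega) hbk
    have hch : w (u ((p+g)+(m-g))) (u (p+g)) ≠ ⊥ := by
      rw [show (p+g)+(m-g) = p + m from by omega, hper]; exact hf
    have k2 := key (p+g) (m-g) (by omega) (by omega) hch
    rw [show (p+g)+(m-g) = p + m from by omega, hper] at k2
    have hsum := hsplit p g (by omega)
    have hxz := hne p g (by omega) (by omega)
    have hrel := (hw.2 (u p) (u (p+g)) hxz).2.2 (fInt w (u p) (u (p+g)))
      (fInt w (u (p+g)) (u p)) (coe_unbot' hf).symm (coe_unbot' hbk).symm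
    omega
  -- the two statuses
  set HI : ℕ → ℕ → Prop := fun p g =>
    (∑ i ∈ Finset.range m, eseq w u i) + trBeta a b (u p) (u (p+g)) + 1 ≤ sig w u p g
    with hHI
  set LO : ℕ → ℕ → Prop := fun p g =>
    sig w u p g + trBeta a b (u (p+g)) (u p) ≤ -1 with hLO
  have hLo_of_bwd : ∀ p g, 2 ≤ g → g ≤ m - 2 → w (u (p+g)) (u p) ≠ ⊥ → LO p g := by
    intro p g h2 hg hbk
    have hnf : w (u p) (u (p+g)) = ⊥ := by
      by_contra hf; exact hnotboth p g h2 hg ⟨hf, hbk⟩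
    have hbeta : w (u (p+g)) (u p) = ((trBeta a b (u (p+g)) (u p) : ℤ) : WithBot ℤ) :=
      ((hw.2 (u p) (u (p+g)) (hne p g (by omega) (by omega))).2.1).mp hnf
    have hfe : fInt w (u (p+g)) (u p) = trBeta a b (u (p+g)) (u p) := by
      simp [fInt, hbeta]
    have k1 := key p g (by omega) (by omega) hbk
    simp only [hLO]
    omega
  have hHi_of_fwd : ∀ p g, 2 ≤ g → g ≤ m - 2 → w (u p) (u (p+g)) ≠ ⊥ → HI p g := by
    intro p g h2 hg hf
    have hnb : w (u (p+g)) (u p) = ⊥ := by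
      by_contra hbk; exact hnotboth p g h2 hg ⟨hf, hbk⟩
    have hbeta : w (u p) (u (p+g)) = ((trBeta a b (u p) (u (p+g)) : ℤ) : WithBot ℤ) :=
      ((hw.2 (u (p+g)) (u p) (hne p g (by omega) (by omega)).symm).2.1).mp hnb
    have hfe : fInt w (u p) (u (p+g)) = trBeta a b (u p) (u (p+g)) := by
      simp [fInt, hbeta]
    have hch : w (u ((p+g)+(m-g))) (u (p+g)) ≠ ⊥ := by
      rw [show (p+g)+(m-g) = p + m from by omega, hper]; exact hf
    have k2 := key (p+g) (m-g) (by omega) (by omega) hch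
    rw [show (p+g)+(m-g) = p + m from by omega, hper] at k2
    have hsum := hsplit p g (by omega)
    simp only [hHI]
    omega
  have hdichot : ∀ p g, 2 ≤ g → g ≤ m - 2 → HI p g ∨ LO p g := by
    intro p g h2 hg
    rcases hfwd_or p g (by omega) (by omega) with hf | hbk
    · exact Or.inl (hHi_of_fwd p g h2 hg hf)
    · exact Or.inr (hLo_of_bwd p g h2 hg hbk)
  have hexcl : ∀ p g, 0 < g → g < m → ¬(HI p g ∧ LO p g) := by
    rintro p g h0 hg ⟨h1, h2⟩
    simp only [hHI] at h1
    simp only [hLO] at h2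
    have hts := tr_sum a b (u p) (u (p+g)) (hne p g h0 hg)
    omega
  have hebound : ∀ i, trAlpha a b (u i) (u (i+1)) ≤ eseq w u i ∧
      eseq w u i ≤ trBeta a b (u i) (u (i+1)) := by
    intro i
    have hne1 : u i ≠ u (i+1) := hne i 1 (by omega) (by omega)
    have hbd := (hw.2 (u i) (u (i+1)) hne1).1 (hedge i)
    rw [← coe_unbot' (hedge i)] at hbd
    exact ⟨WithBot.coe_le_coe.mp hbd.1, WithBot.coe_le_coe.mp hbd.2⟩
  have hstep : ∀ p g, 2 ≤ g → g + 1 ≤ m - 2 → (HI p g ↔ HI p (g+1)) := by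
    intro p g h2 hgm
    have hsig : sig w u p (g+1) = sig w u p g + eseq w u (p+g) :=
      Finset.sum_range_succ _ g
    have hb1 := hebound (p+g)
    have dxy : u p ≠ u (p+g) := hne p g (by omega) (by omega)
    have dyz : u (p+g) ≠ u (p+g+1) := hne (p+g) 1 (by omega) (by omega)
    have dxz : u p ≠ u (p+g+1) := by
      have hd := hne p (g+1) (by omega) (by omega)
      rwa [show p+(g+1) = p+g+1 from rfl] at hd
    constructor
    · intro hH
      rcases hdichot p (g+1) (by omega) (by omega) with h' | h'
      · exact h'
      · exfalso
        simp only [hHI] at hH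
        simp only [hLO] at h'
        rw [show p+(g+1) = p+g+1 from rfl] at h'
        have ha2 := harith2 a b ha hb (u p) (u (p+g)) (u (p+g+1)) dxy dyz dxz
        omega
    · intro hH1
      rcases hdichot p g h2 (by omega) with h' | h'
      · exact h'
      · exfalso
        simp only [hHI] at hH1
        simp only [hLO] at h'
        rw [show p+(g+1) = p+g+1 from rfl] at hH1
        have ha1 := harith1 a b ha hb (u p) (u (p+g)) (u (p+g+1)) dxy dyz dxz
        omega
  have hconst : ∀ p g, 2 ≤ g → g ≤ m - 2 → (HI p g ↔ HI p 2) := by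
    intro p g h2
    induction g, h2 using Nat.le_induction with
    | base => intro _; exact Iff.rfl
    | succ g hg2 ih =>
        intro hg
        exact ((hstep p g hg2 (by omega)).symm).trans (ih (by omega))
  have hopp : ∀ p g, 2 ≤ g → g ≤ m - 2 → (HI p g ↔ ¬ HI (p+g) (m-g)) := by
    intro p g h2 hg
    have hmg2 : 2 ≤ m - g := by omega
    have hmgm : m - g ≤ m - 2 := by omega
    rcases hfwd_or p g (by omega) (by omega) with hf | hbk
    · have h1 := hHi_of_fwd p g h2 hg hf
      have hch : w (u ((p+g)+(m-g))) (u (p+g)) ≠ ⊥ := by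
        rw [show (p+g)+(m-g) = p + m from by omega, hper]; exact hf
      have h2' := hLo_of_bwd (p+g) (m-g) hmg2 hmgm hch
      have h3 := hexcl (p+g) (m-g) (by omega) (by omega)
      exact ⟨fun _ hH => h3 ⟨hH, h2'⟩, fun _ => h1⟩
    · have h1 := hLo_of_bwd p g h2 hg hbk
      have hnH : ¬ HI p g := fun hH => hexcl p g (by omega) (by omega) ⟨hH, h1⟩
      have hch : w (u (p+g)) (u ((p+g)+(m-g))) ≠ ⊥ := by
        rw [show (p+g)+(m-g) = p + m from by omega, hper]; exact hbk
      have h2' := hHi_of_fwd (p+g) (m-g) hmg2 hmgm hch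
      exact ⟨fun hH => absurd hH hnH, fun hc => absurd h2' hc⟩
  have hs : ∀ p g, 2 ≤ g → g ≤ m - 2 → (HI p 2 ↔ ¬ HI (p+g) 2) := by
    intro p g h2 hg
    rw [← hconst p g h2 hg, hopp p g h2 hg,
      hconst (p+g) (m-g) (by omega) (by omega)]
  have e1 := hs 0 2 (by omega) (by omega)
  have e2 := hs 0 3 (by omega) (by omega)
  have e3 := hs 1 2 (by omega) (by omega)
  have e4 := hs 1 3 (by omega) (by omega)
  have e5 := hs 2 2 (by omega) (by omega)
  norm_num at e1 e2 e3 e4 e5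
  tauto

end Aux

theorem stmt8 (n : ℕ) (a b : ℤ) (ha : 0 ≤ a) (hb : 0 ≤ b) (hab : 2 ≤ a + b)
    (w : Fin n → Fin n → WithBot ℤ) (hw : ValidW (trAlpha a b) (trBeta a b) w) :
    MAcyclic w ↔ ∀ c : List (Fin n), c.length ≤ 4 → ¬ MAscending w c := by
  constructor
  · exact fun H c _ => H c
  · intro h c0 hc0
    classical
    have hex : ∃ k, ∃ l : List (Fin n), l.length = k ∧ MAscending w l :=
      ⟨c0.length, c0, rfl, hc0⟩
    set m := Nat.find hex with hmdef
    obtain ⟨c₁, hlen, hasc⟩ := Nat.find_spec hex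
    have hmin : ∀ l : List (Fin n), MAscending w l → m ≤ l.length :=
      fun l hl => Nat.find_min' hex ⟨l, rfl, hl⟩
    have hm2 : 2 ≤ m := by rw [hmdef, ← hlen]; exact hasc.1.1
    have hm5 : 5 ≤ m := by
      by_contra hx
      exact h c₁ (by omega) hasc
    have hm0 : 0 < m := by omega
    have hlen' : c₁.length = m := hlen.trans hmdef.symm
    have hne_nil : c₁ ≠ [] := by
      intro hnil
      rw [hnil] at hlen'
      simp at hlen'
      omega
    set d0 := c₁.head hne_nil with hd0
    set u : ℕ → Fin n := fun i => c₁.getD (i % m) d0 with hu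
    have hper : ∀ i, u (i+m) = u i := by
      intro i
      simp only [hu]
      rw [Nat.add_mod_right]
    have hinjm : ∀ s t, s < m → t < m → u s = u t → s = t := by
      intro s t hs ht hst
      simp only [hu] at hst
      rw [Nat.mod_eq_of_lt hs, Nat.mod_eq_of_lt ht,
        List.getD_eq_getElem _ _ (show s < c₁.length by omega),
        List.getD_eq_getElem _ _ (show t < c₁.length by omega)] at hst
      exact (List.Nodup.getElem_inj_iff hasc.1.2.1).mp hst
    have hmod1 : ∀ i : ℕ, (i % m + 1) % m = (i+1) % m := by
      intro i
      have h1 : 1 % m = 1 := Nat.mod_eq_of_lt (by omega)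
      have h2 := Nat.add_mod i 1 m
      rw [h1] at h2
      exact h2.symm
    have hedge : ∀ i, w (u i) (u (i+1)) ≠ ⊥ := by
      intro i
      have hi : i % m < c₁.length := by rw [hlen']; exact Nat.mod_lt _ hm0
      have hce := cycle_edge hasc.1 d0 (i % m) hi
      rw [hlen', hmod1 i] at hce
      simp only [hu]
      exact hce
    have hS : 0 ≤ ∑ i ∈ Finset.range m, eseq w u i := by
      have h0 := hasc.2
      rw [cycWeight_eq w c₁ d0, hlen'] at h0
      have hterm : ∀ i ∈ Finset.range m,
          w (c₁.getD i d0) (c₁.getD ((i+1) % m) d0)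
            = ((eseq w u i : ℤ) : WithBot ℤ) := by
        intro i hi
        rw [Finset.mem_range] at hi
        have e1 : c₁.getD i d0 = u i := by
          simp only [hu]
          rw [Nat.mod_eq_of_lt hi]
        have e2 : c₁.getD ((i+1) % m) d0 = u (i+1) := by
          simp only [hu]
        rw [e1, e2]
        exact (coe_unbot' (hedge i)).symm
      rw [Finset.sum_congr rfl hterm, ← coe_sum, ← WithBot.coe_zero,
        WithBot.coe_le_coe] at h0
      exact h0
    exact no_big a b ha hb hab w hw m hm5 u hper hinjm hedge hmin hS
end

section
/- A separated contiguous integral deformation of the braid arrangement on {1,…,n} satisfies the weak triangle inequality if and only if β(i,j) ≤ β(i,k) + 1 and β(i,j) ≤ β(k,j) + 1 hold for all triples of pairwise distinct i, j, k ∈ {1,…,n}. -/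
/-- The deformation with bounds `a = α`, `b = β` satisfies the weak triangle
inequality: for every valid `m`-acyclic weight function `w` and pairwise
distinct `i, j, k`, if `w i j ≥ 0` and `w j k ≥ 0` then
`w i k ≤ w i j + w j k + 1`. -/
def WeakTriangle {n : ℕ} (a b : Fin n → Fin n → ℤ) : Prop :=
  ∀ w : Fin n → Fin n → WithBot ℤ, ValidW a b w → MAcyclic w →
    ∀ i j k : Fin n, i ≠ j → j ≠ k → i ≠ k →
      0 ≤ w i j → 0 ≤ w j k → w i k ≤ w i j + w j k + 1

lemma list_sum_lt' {α : Type*} (L : List α) (f g : α → ℚ) (hne : L ≠ [])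
    (h : ∀ p ∈ L, f p < g p) : (L.map f).sum < (L.map g).sum := by
  induction L with
  | nil => simp at hne
  | cons x xs ih =>
    rcases eq_or_ne xs [] with rfl | hxs
    · simpa using h x (by simp)
    · simp only [List.map_cons, List.sum_cons]
      exact add_lt_add (h x (by simp)) (ih hxs (fun p hp => h p (List.mem_cons_of_mem _ hp)))

lemma coe_list_sum' (l : List ℤ) :
    ((l.map (fun x : ℤ => (x : WithBot ℤ))).sum) = ((l.sum : ℤ) : WithBot ℤ) := by
  induction l with
  | nil => simp
  | cons x xs ih => simp [ih]

lemma map_sub_sum' {α : Type*} (L : List α) (f g : α → ℚ) :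
    (L.map fun p => f p - g p).sum = (L.map f).sum - (L.map g).sum := by
  induction L with
  | nil => simp
  | cons x xs ih => simp only [List.map_cons, List.sum_cons, ih]; ring

lemma macyclic_of_potential {n : ℕ} (w : Fin n → Fin n → WithBot ℤ) (φ : Fin n → ℚ)
    (h : ∀ u v : Fin n, w u v ≠ ⊥ → ∃ x : ℤ, w u v = (x : WithBot ℤ) ∧ (x : ℚ) < φ v - φ u) :
    MAcyclic w := by
  rintro c ⟨⟨hlen, hnd, hedge⟩, hw⟩
  set L := cpairs c with hL
  have hlenL : L.length = c.length := by simp [hL, cpairs]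
  have hLne : L ≠ [] := by
    intro h0; rw [h0] at hlenL; simp at hlenL; omega
  set g : Fin n × Fin n → ℤ := fun p => WithBot.unbotD 0 (w p.1 p.2) with hg
  have hfin : ∀ p ∈ L, w p.1 p.2 = ((g p : ℤ) : WithBot ℤ) := by
    intro p hp
    obtain ⟨x, hx, -⟩ := h p.1 p.2 (hedge p hp)
    rw [hx]; simp [hg, hx]
  have hsum : cycWeight w c = (((L.map g).sum : ℤ) : WithBot ℤ) := by
    rw [cycWeight, ← coe_list_sum', List.map_map]
    exact congrArg List.sum (List.map_congr_left hfin)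
  rw [hsum] at hw
  have hw' : (0 : ℤ) ≤ (L.map g).sum := by exact_mod_cast hw
  have hstrict : ((L.map (fun p => ((g p : ℚ)))).sum) < (L.map fun p => φ p.2 - φ p.1).sum := by
    apply list_sum_lt' _ _ _ hLne
    intro p hp
    obtain ⟨x, hx, hxlt⟩ := h p.1 p.2 (hedge p hp)
    have hgp : g p = x := by simp [hg, hx]
    rw [hgp]; exact hxlt
  have htel : (L.map fun p => φ p.2 - φ p.1).sum = 0 := by
    rw [map_sub_sum']
    have h1 : L.map (fun p => φ p.2) = (c.rotate 1).map φ := by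
      have e1 : L.map Prod.snd = c.rotate 1 := List.map_snd_zip (by simp)
      calc L.map (fun p => φ p.2) = (L.map Prod.snd).map φ := by rw [List.map_map]; rfl
        _ = (c.rotate 1).map φ := by rw [e1]
    have h2 : L.map (fun p => φ p.1) = c.map φ := by
      have e1 : L.map Prod.fst = c := List.map_fst_zip (by simp)
      calc L.map (fun p => φ p.1) = (L.map Prod.fst).map φ := by rw [List.map_map]; rfl
        _ = c.map φ := by rw [e1]
    rw [h1, h2, ((c.rotate_perm 1).map φ).sum_eq]
    ring
  rw [htel] at hstrict
  have hcast : ((L.map g).sum : ℚ) = (L.map (fun p => ((g p : ℚ)))).sum := by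
    rw [Int.cast_list_sum, List.map_map]; rfl
  rw [← hcast] at hstrict
  have hQ : (0:ℚ) ≤ ((L.map g).sum : ℚ) := by exact_mod_cast hw'
  linarith

def Cond {n : ℕ} (a b : Fin n → Fin n → ℤ) (w : Fin n → Fin n → WithBot ℤ) (i j : Fin n) : Prop :=
  (w i j ≠ ⊥ → (a i j : WithBot ℤ) ≤ w i j ∧ w i j ≤ (b i j : WithBot ℤ)) ∧
  (w i j = ⊥ ↔ w j i = (b j i : WithBot ℤ)) ∧
  (∀ x y : ℤ, w i j = (x : WithBot ℤ) → w j i = (y : WithBot ℤ) → y = -1 - x)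

lemma condI {n : ℕ} (a b : Fin n → Fin n → ℤ) (w : Fin n → Fin n → WithBot ℤ) (u v : Fin n)
    (h1 : w u v = ((b u v : ℤ) : WithBot ℤ)) (h2 : w v u = ⊥) (hab : a u v ≤ b u v) :
    Cond a b w u v ∧ Cond a b w v u := by
  refine ⟨⟨?_, ?_, ?_⟩, ⟨?_, ?_, ?_⟩⟩
  · intro _; rw [h1]; exact ⟨by exact_mod_cast hab, le_refl _⟩
  · rw [h1, h2]; simp
  · intro x y _ hy; rw [h2] at hy; exact absurd hy.symm (by simp)
  · intro hne; exact absurd h2 hne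
  · rw [h1, h2]; simp
  · intro x y hx _; rw [h2] at hx; exact absurd hx.symm (by simp)

lemma condII {n : ℕ} (a b : Fin n → Fin n → ℤ) (w : Fin n → Fin n → WithBot ℤ) (u v : Fin n)
    (h1 : w u v = ((0 : ℤ) : WithBot ℤ))
    (h2 : w v u = if b u v = 0 then ⊥ else (((-1 : ℤ)) : WithBot ℤ))
    (hauv : a u v ≤ 0) (hbuv : 0 ≤ b u v) (hbvu : 0 ≤ b v u) (havu : a v u = -(b u v)) :
    Cond a b w u v ∧ Cond a b w v u := by
  by_cases h0 : b u v = 0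
  · rw [if_pos h0] at h2
    exact condI a b w u v (by rw [h0]; exact_mod_cast h1) h2 (by omega)
  · rw [if_neg h0] at h2
    have hb1 : 1 ≤ b u v := by omega
    refine ⟨⟨?_, ?_, ?_⟩, ⟨?_, ?_, ?_⟩⟩
    · intro _; rw [h1]
      constructor
      · exact_mod_cast hauv
      · exact_mod_cast hbuv
    · rw [h1, h2]
      constructor
      · intro hc; exact absurd hc (by simp)
      · intro hc
        have : (-1 : ℤ) = b v u := by exact_mod_cast hc
        omega
    · intro x y hx hy
      rw [h1] at hx; rw [h2] at hy
      have hx' : x = 0 := by exact_mod_cast hx.symm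
      have hy' : y = -1 := by exact_mod_cast hy.symm
      omega
    · intro _; rw [h2]
      constructor
      · rw [havu]; exact_mod_cast (by omega : -(b u v) ≤ -1)
      · exact_mod_cast (by omega : (-1:ℤ) ≤ b v u)
    · rw [h1, h2]
      constructor
      · intro hc; exact absurd hc (by simp)
      · intro hc
        have : (0 : ℤ) = b u v := by exact_mod_cast hc
        omega
    · intro x y hx hy
      rw [h2] at hx; rw [h1] at hy
      have hx' : x = -1 := by exact_mod_cast hx.symm
      have hy' : y = 0 := by exact_mod_cast hy.symm
      omega

def mkW {n : ℕ} (b : Fin n → Fin n → ℤ) (ρ : Fin n → ℕ) (p q : Fin n) :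
    Fin n → Fin n → WithBot ℤ := fun u v =>
  if u = p ∧ v = q then (((0:ℤ)) : WithBot ℤ)
  else if u = q ∧ v = p then (if b p q = 0 then ⊥ else (((-1:ℤ)) : WithBot ℤ))
  else if ρ u < ρ v then ((b u v : ℤ) : WithBot ℤ) else ⊥

lemma mkW_generic {n : ℕ} (b : Fin n → Fin n → ℤ) (ρ : Fin n → ℕ) (p q u v : Fin n)
    (h1 : ¬(u = p ∧ v = q)) (h2 : ¬(u = q ∧ v = p)) :
    mkW b ρ p q u v = if ρ u < ρ v then ((b u v : ℤ) : WithBot ℤ) else ⊥ := by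
  simp [mkW, h1, h2]

lemma mkW_valid {n : ℕ} (a b : Fin n → Fin n → ℤ) (ρ : Fin n → ℕ) (p q : Fin n)
    (hinj : Function.Injective ρ) (hpq : ρ q = ρ p + 1)
    (hab' : ∀ u v : Fin n, u ≠ v → a u v ≤ b u v)
    (hsep' : ∀ u v : Fin n, u ≠ v → a u v ≤ 0 ∧ 0 ≤ b u v)
    (hnega : ∀ u v : Fin n, u ≠ v → a v u = -(b u v)) :
    ValidW a b (mkW b ρ p q) := by
  have hpqne : p ≠ q := by intro h; rw [h] at hpq; omega
  constructor
  · intro u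
    rw [mkW_generic b ρ p q u u (fun h => hpqne (h.1.symm.trans h.2))
      (fun h => hpqne (h.2.symm.trans h.1))]
    simp
  · intro u v huv
    show Cond a b (mkW b ρ p q) u v
    by_cases hs1 : u = p ∧ v = q
    · obtain ⟨rfl, rfl⟩ := hs1
      refine (condII a b _ u v ?_ ?_ (hsep' u v huv).1 (hsep' u v huv).2
        (hsep' v u (Ne.symm huv)).2 (hnega u v huv)).1
      · simp [mkW]
      · simp [mkW, huv, Ne.symm huv]
    · by_cases hs2 : u = q ∧ v = p
      · obtain ⟨rfl, rfl⟩ := hs2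
        refine (condII a b _ v u ?_ ?_ (hsep' v u (Ne.symm huv)).1 (hsep' v u (Ne.symm huv)).2
          (hsep' u v huv).2 (hnega v u (Ne.symm huv))).2
        · simp [mkW]
        · simp [mkW, huv, Ne.symm huv]
      · have hρ : ρ u ≠ ρ v := fun h => huv (hinj h)
        by_cases hlt : ρ u < ρ v
        · refine (condI a b _ u v ?_ ?_ (hab' u v huv)).1
          · rw [mkW_generic b ρ p q u v hs1 hs2, if_pos hlt]
          · rw [mkW_generic b ρ p q v u (fun h => hs2 ⟨h.2, h.1⟩) (fun h => hs1 ⟨h.2, h.1⟩)]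
            rw [if_neg (by omega)]
        · refine (condI a b _ v u ?_ ?_ (hab' v u huv.symm)).2
          · rw [mkW_generic b ρ p q v u (fun h => hs2 ⟨h.2, h.1⟩) (fun h => hs1 ⟨h.2, h.1⟩)]
            rw [if_pos (by omega)]
          · rw [mkW_generic b ρ p q u v hs1 hs2, if_neg hlt]


lemma mkW_macyclic {n : ℕ} (b : Fin n → Fin n → ℤ) (ρ : Fin n → ℕ) (p q : Fin n)
    (hinj : Function.Injective ρ) (hpq : ρ q = ρ p + 1)
    (C : ℤ) (hC0 : 0 ≤ C) (hC : ∀ u v : Fin n, b u v ≤ C) :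
    MAcyclic (mkW b ρ p q) := by
  have hpqne : p ≠ q := fun h => by rw [h] at hpq; omega
  set φ : Fin n → ℚ := fun u => ((C:ℚ)+1) * (ρ u : ℚ) + (if u = q then (1/2 - ((C:ℚ)+1)) else 0)
    with hφ
  have hφq : φ q = ((C:ℚ)+1) * (ρ p : ℚ) + 1/2 := by
    simp only [hφ, if_pos rfl, hpq]
    push_cast
    ring
  have hφu : ∀ u : Fin n, u ≠ q → φ u = ((C:ℚ)+1) * (ρ u : ℚ) := by
    intro u hu; simp only [hφ, if_neg hu, add_zero]
  have hC0' : (0:ℚ) ≤ (C:ℚ) := by exact_mod_cast hC0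
  apply macyclic_of_potential _ φ
  intro u v hne
  by_cases hs1 : u = p ∧ v = q
  · obtain ⟨rfl, rfl⟩ := hs1
    refine ⟨0, by simp [mkW], ?_⟩
    rw [hφq, hφu u hpqne]
    push_cast
    linarith
  · by_cases hs2 : u = q ∧ v = p
    · obtain ⟨rfl, rfl⟩ := hs2
      have huv : u ≠ v := Ne.symm hpqne
      have hb0 : b v u ≠ 0 := by
        intro h0
        apply hne
        simp [mkW, huv, hpqne, h0]
      refine ⟨-1, by simp [mkW, huv, hpqne, hb0], ?_⟩
      rw [hφq, hφu v hpqne]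
      push_cast
      linarith
    · rw [mkW_generic b ρ p q u v hs1 hs2] at hne ⊢
      by_cases hlt : ρ u < ρ v
      · rw [if_pos hlt]
        refine ⟨b u v, rfl, ?_⟩
        have hCuv : ((b u v : ℤ):ℚ) ≤ (C:ℚ) := by exact_mod_cast hC u v
        by_cases hvq : v = q
        · have huq : u ≠ q := by
            intro h; rw [h, hvq] at hlt; exact absurd hlt (lt_irrefl _)
          have hup : u ≠ p := fun h => hs1 ⟨h, hvq⟩
          have hρ : ρ u + 1 ≤ ρ p := by
            have h1 : ρ u ≠ ρ p := fun h => hup (hinj h)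
            rw [hvq] at hlt
            omega
          have hρ' : (ρ u : ℚ) + 1 ≤ (ρ p : ℚ) := by exact_mod_cast hρ
          rw [hvq] at hCuv ⊢
          rw [hφq, hφu u huq]
          nlinarith
        · by_cases huq : u = q
          · rw [huq] at hlt
            have hρ : ρ p + 2 ≤ ρ v := by omega
            have hρ' : (ρ p : ℚ) + 2 ≤ (ρ v : ℚ) := by exact_mod_cast hρ
            rw [huq] at hCuv ⊢
            rw [hφq, hφu v hvq]
            nlinarith
          · have hρ' : (ρ u : ℚ) + 1 ≤ (ρ v : ℚ) := by exact_mod_cast hlt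
            rw [hφu u huq, hφu v hvq]
            nlinarith
      · rw [if_neg hlt] at hne
        exact absurd rfl hne

theorem stmt9 (n : ℕ) (a b : Fin n → Fin n → ℤ)
    (hab : ∀ i j : Fin n, i < j → a i j ≤ b i j)
    (hsym : ∀ i j : Fin n, i < j → a j i = -(b i j) ∧ b j i = -(a i j))
    (hsep : ∀ i j : Fin n, i < j → a i j ≤ 0 ∧ 0 ≤ b i j) :
    WeakTriangle a b ↔
      ∀ i j k : Fin n, i ≠ j → j ≠ k → i ≠ k →
        b i j ≤ b i k + 1 ∧ b i j ≤ b k j + 1 := by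
  have hnega : ∀ u v : Fin n, u ≠ v → a v u = -(b u v) := by
    intro u v h
    rcases lt_or_gt_of_ne h with hlt | hgt
    · exact (hsym u v hlt).1
    · have := (hsym v u hgt).2
      omega
  have hsep' : ∀ u v : Fin n, u ≠ v → a u v ≤ 0 ∧ 0 ≤ b u v := by
    intro u v h
    rcases lt_or_gt_of_ne h with hlt | hgt
    · exact hsep u v hlt
    · have h1 := (hsym v u hgt).1
      have h2 := (hsym v u hgt).2
      have h3 := hsep v u hgt
      omega
  have hab' : ∀ u v : Fin n, u ≠ v → a u v ≤ b u v := by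
    intro u v h
    have := hsep' u v h
    omega
  constructor
  · -- WeakTriangle → bound condition
    intro hWT i j k hij hjk hik
    set ρ : Fin n → ℕ :=
      fun u => if u = i then 0 else if u = k then 1 else if u = j then 2 else u.val + 3 with hρ
    have hinj : Function.Injective ρ := by
      intro u v h
      simp only [hρ] at h
      split_ifs at h <;> subst_vars <;>
        first
          | rfl
          | (exact absurd h (by omega))
          | (exact Fin.val_injective (by omega))
    have hρi : ρ i = 0 := by simp [hρ]
    have hρk : ρ k = 1 := by simp [hρ, Ne.symm hik]
    have hρj : ρ j = 2 := by simp [hρ, Ne.symm hij, hjk]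
    set C : ℤ := ∑ u : Fin n, ∑ v : Fin n, |b u v| with hCdef
    have hC0 : 0 ≤ C :=
      Finset.sum_nonneg (fun u _ => Finset.sum_nonneg (fun v _ => abs_nonneg _))
    have hC : ∀ u v : Fin n, b u v ≤ C := by
      intro u v
      have h1 : |b u v| ≤ ∑ v' : Fin n, |b u v'| :=
        Finset.single_le_sum (f := fun v' => |b u v'|)
          (fun v' _ => abs_nonneg _) (Finset.mem_univ v)
      have h2 : (∑ v' : Fin n, |b u v'|) ≤ C :=
        Finset.single_le_sum (f := fun u' => ∑ v' : Fin n, |b u' v'|)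
          (fun u' _ => Finset.sum_nonneg fun v' _ => abs_nonneg _) (Finset.mem_univ u)
      have h3 := le_abs_self (b u v)
      omega
    constructor
    · -- b i j ≤ b i k + 1
      by_contra hx
      have hbad : b i k + 2 ≤ b i j := by omega
      have hpq : ρ j = ρ k + 1 := by rw [hρj, hρk]
      set W := mkW b ρ k j with hW
      have hval : ValidW a b W := mkW_valid a b ρ k j hinj hpq hab' hsep' hnega
      have hmac : MAcyclic W := mkW_macyclic b ρ k j hinj hpq C hC0 hC
      have hWik : W i k = ((b i k : ℤ) : WithBot ℤ) := by
        rw [hW, mkW_generic b ρ k j i k (fun h => hik h.1) (fun h => hij h.1),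
          if_pos (by rw [hρi, hρk]; omega)]
      have hWkj : W k j = ((0 : ℤ) : WithBot ℤ) := by simp [hW, mkW]
      have hWij : W i j = ((b i j : ℤ) : WithBot ℤ) := by
        rw [hW, mkW_generic b ρ k j i j (fun h => hik h.1) (fun h => hij h.1),
          if_pos (by rw [hρi, hρj]; omega)]
      have hfinal := hWT W hval hmac i k j hik (Ne.symm hjk) hij
        (by rw [hWik]; exact_mod_cast (hsep' i k hik).2)
        (by rw [hWkj]; exact_mod_cast le_refl (0:ℤ))
      rw [hWik, hWkj, hWij] at hfinal
      have : b i j ≤ b i k + 0 + 1 := by exact_mod_cast hfinal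
      omega
    · -- b i j ≤ b k j + 1
      by_contra hx
      have hbad : b k j + 2 ≤ b i j := by omega
      have hpq : ρ k = ρ i + 1 := by rw [hρi, hρk]
      set W := mkW b ρ i k with hW
      have hval : ValidW a b W := mkW_valid a b ρ i k hinj hpq hab' hsep' hnega
      have hmac : MAcyclic W := mkW_macyclic b ρ i k hinj hpq C hC0 hC
      have hWik : W i k = ((0 : ℤ) : WithBot ℤ) := by simp [hW, mkW]
      have hWkj : W k j = ((b k j : ℤ) : WithBot ℤ) := by
        rw [hW, mkW_generic b ρ i k k j (fun h => hik h.1.symm) (fun h => hij h.2.symm),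
          if_pos (by rw [hρk, hρj]; omega)]
      have hWij : W i j = ((b i j : ℤ) : WithBot ℤ) := by
        rw [hW, mkW_generic b ρ i k i j (fun h => hjk h.2) (fun h => hik h.1),
          if_pos (by rw [hρi, hρj]; omega)]
      have hfinal := hWT W hval hmac i k j hik (Ne.symm hjk) hij
        (by rw [hWik]; exact_mod_cast le_refl (0:ℤ))
        (by rw [hWkj]; exact_mod_cast (hsep' k j (Ne.symm hjk)).2)
      rw [hWik, hWkj, hWij] at hfinal
      have : b i j ≤ 0 + b k j + 1 := by exact_mod_cast hfinal
      omega
  · -- bound condition → WeakTriangle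
    intro hcond w hv hm i j k hij hjk hik h0ij h0jk
    have hbij : w i j ≠ ⊥ := by
      intro h; rw [h] at h0ij; simp at h0ij
    have hbjk : w j k ≠ ⊥ := by
      intro h; rw [h] at h0jk; simp at h0jk
    obtain ⟨x, hx⟩ := WithBot.ne_bot_iff_exists.mp hbij
    obtain ⟨y, hy⟩ := WithBot.ne_bot_iff_exists.mp hbjk
    have h0x : 0 ≤ x := by rw [← hx] at h0ij; exact_mod_cast h0ij
    have h0y : 0 ≤ y := by rw [← hy] at h0jk; exact_mod_cast h0jk
    by_cases hzbot : w i k = ⊥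
    · rw [hzbot]; exact bot_le
    obtain ⟨z, hz⟩ := WithBot.ne_bot_iff_exists.mp hzbot
    have hzb : z ≤ b i k := by
      have := ((hv.2 i k hik).1 hzbot).2
      rw [← hz] at this
      exact_mod_cast this
    have hgoal : z ≤ x + y + 1 → w i k ≤ w i j + w j k + 1 := by
      intro hle
      rw [← hx, ← hy, ← hz]
      exact_mod_cast hle
    have hH := hcond i k j hik (Ne.symm hjk) hij
    by_cases hji : w j i = ⊥
    · -- x = b i j
      have hxb : x = b i j := by
        have := ((hv.2 j i (Ne.symm hij)).2.1).mp hji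
        rw [← hx] at this
        exact_mod_cast this
      exact hgoal (by omega)
    · obtain ⟨x', hx'⟩ := WithBot.ne_bot_iff_exists.mp hji
      have hx'v : x' = -1 - x := (hv.2 i j hij).2.2 x x' hx.symm hx'.symm
      by_cases hkj : w k j = ⊥
      · have hyb : y = b j k := by
          have := ((hv.2 k j (Ne.symm hjk)).2.1).mp hkj
          rw [← hy] at this
          exact_mod_cast this
        exact hgoal (by omega)
      · obtain ⟨y', hy'⟩ := WithBot.ne_bot_iff_exists.mp hkj
        have hy'v : y' = -1 - y := (hv.2 j k hjk).2.2 y y' hy.symm hy'.symm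
        have hcyc : IsCycle w [i, k, j] := by
          refine ⟨by simp, by simp [hik, hij, hjk, Ne.symm hjk], ?_⟩
          intro p hp
          have hcp : cpairs [i, k, j] = [(i, k), (k, j), (j, i)] := rfl
          rw [hcp] at hp
          simp only [List.mem_cons, List.not_mem_nil, or_false] at hp
          rcases hp with rfl | rfl | rfl
          · exact hzbot
          · exact hkj
          · exact hji
        have hcw : cycWeight w [i, k, j] = ((z + y' + x' : ℤ) : WithBot ℤ) := by
          show ((cpairs [i, k, j]).map fun p => w p.1 p.2).sum = _
          have hcp : cpairs [i, k, j] = [(i, k), (k, j), (j, i)] := rfl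
          rw [hcp]
          simp only [List.map_cons, List.map_nil, List.sum_cons, List.sum_nil, add_zero]
          rw [← hz, ← hy', ← hx']
          push_cast
          rw [add_assoc]
        have hnasc : ¬ (0 ≤ cycWeight w [i, k, j]) := fun h0 => hm _ ⟨hcyc, h0⟩
        rw [hcw] at hnasc
        have hlt : ¬ ((0 : ℤ) ≤ z + y' + x') := by exact_mod_cast hnasc
        exact hgoal (by omega)
end

section
/- Let n ≥ 3 and let a, b be integers with 1 ≤ a ≤ b. The truncated affine arrangement 𝒜^{a,b}_{n−1} (which is separated) satisfies the weak triangle inequality if and only if b ≤ a + 1. -/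
/-- auxiliary: every vertex of a list has an incoming cyclic pair. -/
lemma exists_incoming {n : ℕ} (c : List (Fin n)) (v : Fin n) (hv : v ∈ c) :
    ∃ u ∈ c, (u, v) ∈ cpairs c := by
  have h1 : ((cpairs c).map Prod.snd) = c.rotate 1 := List.map_snd_zip (by simp)
  have h2 : ((cpairs c).map Prod.fst) = c := List.map_fst_zip (by simp)
  have hv' : v ∈ (cpairs c).map Prod.snd := by rw [h1]; simpa using hv
  obtain ⟨p, hp, hpv⟩ := List.mem_map.mp hv'
  refine ⟨p.1, ?_, ?_⟩
  · rw [← h2]; exact List.mem_map_of_mem hp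
  · rwa [← hpv, Prod.mk.eta]

/-- the counterexample weight function. -/
def cw (a b : ℤ) {n : ℕ} (u v : Fin n) : WithBot ℤ :=
  if u.val = 1 ∧ v.val = 0 then ((a - 1 : ℤ) : WithBot ℤ)
  else if u.val = 0 ∧ v.val = 2 then ((0 : ℤ) : WithBot ℤ)
  else if u.val = 2 ∧ v.val = 0 then ((-1 : ℤ) : WithBot ℤ)
  else if u.val = 1 ∧ v.val = 2 then ((b - 1 : ℤ) : WithBot ℤ)
  else if u.val = 2 ∧ v.val = 1 then ⊥
  else if v.val < u.val then ((a - 1 : ℤ) : WithBot ℤ)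
  else ⊥

set_option maxHeartbeats 2000000 in
lemma cw_valid {n : ℕ} (a b : ℤ) (ha : 1 ≤ a) (hb : a + 2 ≤ b) :
    ValidW (trAlpha (n := n) a b) (trBeta a b) (cw a b) := by
  constructor
  · intro i
    simp only [cw]
    split_ifs <;> first | rfl | (exfalso; omega)
  · intro i j hij
    have hvij : i.val ≠ j.val := fun h => hij (Fin.val_injective h)
    have hcases : (i.val = 1 ∧ j.val = 0) ∨ (i.val = 0 ∧ j.val = 1) ∨
        (i.val = 0 ∧ j.val = 2) ∨ (i.val = 2 ∧ j.val = 0) ∨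
        (i.val = 1 ∧ j.val = 2) ∨ (i.val = 2 ∧ j.val = 1) ∨
        ((2 < i.val ∨ 2 < j.val) ∧ j.val < i.val) ∨
        ((2 < i.val ∨ 2 < j.val) ∧ i.val < j.val) := by omega
    rcases hcases with ⟨h1, h2⟩ | ⟨h1, h2⟩ | ⟨h1, h2⟩ | ⟨h1, h2⟩ | ⟨h1, h2⟩ | ⟨h1, h2⟩ | ⟨h1, h2⟩ | ⟨h1, h2⟩
    · have cwij : cw a b i j = ((a-1:ℤ) : WithBot ℤ) := by
        simp only [cw]; split_ifs <;> first | rfl | (exfalso; omega)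
      have cwji : cw a b j i = (⊥ : WithBot ℤ) := by
        simp only [cw]; split_ifs <;> first | rfl | (exfalso; omega)
      rw [cwij, cwji]
      simp only [trAlpha, trBeta, Fin.lt_def]
      split_ifs <;>
        first
          | (exfalso; omega)
          | (refine ⟨?_, ?_, ?_⟩ <;> simp <;> (intros; omega))
    · have cwij : cw a b i j = (⊥ : WithBot ℤ) := by
        simp only [cw]; split_ifs <;> first | rfl | (exfalso; omega)
      have cwji : cw a b j i = ((a-1:ℤ) : WithBot ℤ) := by
        simp only [cw]; split_ifs <;> first | rfl | (exfalso; omega)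
      rw [cwij, cwji]
      simp only [trAlpha, trBeta, Fin.lt_def]
      split_ifs <;>
        first
          | (exfalso; omega)
          | (refine ⟨?_, ?_, ?_⟩ <;> simp <;> (intros; omega))
    · have cwij : cw a b i j = ((0:ℤ) : WithBot ℤ) := by
        simp only [cw]; split_ifs <;> first | rfl | (exfalso; omega)
      have cwji : cw a b j i = ((-1:ℤ) : WithBot ℤ) := by
        simp only [cw]; split_ifs <;> first | rfl | (exfalso; omega)
      rw [cwij, cwji]
      simp only [trAlpha, trBeta, Fin.lt_def]
      split_ifs <;>
        first
          | (exfalso; omega)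
          | (refine ⟨?_, ?_, ?_⟩ <;> simp <;> (intros; omega))
    · have cwij : cw a b i j = ((-1:ℤ) : WithBot ℤ) := by
        simp only [cw]; split_ifs <;> first | rfl | (exfalso; omega)
      have cwji : cw a b j i = ((0:ℤ) : WithBot ℤ) := by
        simp only [cw]; split_ifs <;> first | rfl | (exfalso; omega)
      rw [cwij, cwji]
      simp only [trAlpha, trBeta, Fin.lt_def]
      split_ifs <;>
        first
          | (exfalso; omega)
          | (refine ⟨?_, ?_, ?_⟩ <;> simp <;> (intros; omega))
    · have cwij : cw a b i j = ((b-1:ℤ) : WithBot ℤ) := by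
        simp only [cw]; split_ifs <;> first | rfl | (exfalso; omega)
      have cwji : cw a b j i = (⊥ : WithBot ℤ) := by
        simp only [cw]; split_ifs <;> first | rfl | (exfalso; omega)
      rw [cwij, cwji]
      simp only [trAlpha, trBeta, Fin.lt_def]
      split_ifs <;>
        first
          | (exfalso; omega)
          | (refine ⟨?_, ?_, ?_⟩ <;> simp <;> (intros; omega))
    · have cwij : cw a b i j = (⊥ : WithBot ℤ) := by
        simp only [cw]; split_ifs <;> first | rfl | (exfalso; omega)
      have cwji : cw a b j i = ((b-1:ℤ) : WithBot ℤ) := by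
        simp only [cw]; split_ifs <;> first | rfl | (exfalso; omega)
      rw [cwij, cwji]
      simp only [trAlpha, trBeta, Fin.lt_def]
      split_ifs <;>
        first
          | (exfalso; omega)
          | (refine ⟨?_, ?_, ?_⟩ <;> simp <;> (intros; omega))
    · have cwij : cw a b i j = ((a-1:ℤ) : WithBot ℤ) := by
        simp only [cw]; split_ifs <;> first | rfl | (exfalso; omega)
      have cwji : cw a b j i = (⊥ : WithBot ℤ) := by
        simp only [cw]; split_ifs <;> first | rfl | (exfalso; omega)
      rw [cwij, cwji]
      simp only [trAlpha, trBeta, Fin.lt_def]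
      split_ifs <;>
        first
          | (exfalso; omega)
          | (refine ⟨?_, ?_, ?_⟩ <;> simp <;> (intros; omega))
    · have cwij : cw a b i j = (⊥ : WithBot ℤ) := by
        simp only [cw]; split_ifs <;> first | rfl | (exfalso; omega)
      have cwji : cw a b j i = ((a-1:ℤ) : WithBot ℤ) := by
        simp only [cw]; split_ifs <;> first | rfl | (exfalso; omega)
      rw [cwij, cwji]
      simp only [trAlpha, trBeta, Fin.lt_def]
      split_ifs <;>
        first
          | (exfalso; omega)
          | (refine ⟨?_, ?_, ?_⟩ <;> simp <;> (intros; omega))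

lemma cw_acyclic {n : ℕ} (a b : ℤ) (ha : 1 ≤ a) (hb : a + 2 ≤ b) :
    MAcyclic (cw a b (n := n)) := by
  rintro c ⟨⟨hlen, hnd, hedge⟩, hw0⟩
  have hcne : c ≠ [] := by intro h; simp [h] at hlen
  obtain ⟨x0, hx0⟩ := List.exists_mem_of_ne_nil c hcne
  obtain ⟨m, hm, hmax⟩ := c.toFinset.exists_max_image Fin.val ⟨x0, List.mem_toFinset.mpr hx0⟩
  have hle2 : ∀ v ∈ c, v.val ≤ 2 := by
    have hm2 : m.val ≤ 2 := by
      obtain ⟨u, hu, hp⟩ := exists_incoming c m (List.mem_toFinset.mp hm)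
      have hne := hedge _ hp
      have hum : u.val ≤ m.val := hmax u (List.mem_toFinset.mpr hu)
      by_contra h3
      push_neg at h3
      simp only [cw] at hne
      split_ifs at hne <;> first | omega | exact hne rfl
    intro v hv
    exact le_trans (hmax v (List.mem_toFinset.mpr hv)) hm2
  have hne1 : ∀ v ∈ c, v.val ≠ 1 := by
    intro v hv h1
    obtain ⟨u, hu, hp⟩ := exists_incoming c v hv
    have hne := hedge _ hp
    have hu2 : u.val ≤ 2 := hle2 u hu
    simp only [cw] at hne
    split_ifs at hne <;> first | omega | exact hne rfl
  have hmem : ∀ v ∈ c, v.val = 0 ∨ v.val = 2 := by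
    intro v hv
    have := hle2 v hv
    have := hne1 v hv
    omega
  have hsub : (c.map Fin.val) ⊆ [0, 2] := by
    intro t ht
    obtain ⟨v, hv, rfl⟩ := List.mem_map.mp ht
    rcases hmem v hv with h | h <;> simp [h]
  have hndv : (c.map Fin.val).Nodup := hnd.map Fin.val_injective
  have hle : c.length ≤ 2 := by
    have := (List.subperm_of_subset hndv hsub).length_le
    simpa using this
  match c, hlen, hle with
  | [x, y], _, _ =>
    have hx : x.val = 0 ∨ x.val = 2 := hmem x (by simp)
    have hy : y.val = 0 ∨ y.val = 2 := hmem y (by simp)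
    have hxy : x ≠ y := by
      simp only [List.nodup_cons, List.mem_singleton] at hnd
      exact hnd.1
    have hvxy : x.val ≠ y.val := fun h => hxy (Fin.val_injective h)
    have hcp : cpairs [x, y] = [(x, y), (y, x)] := by simp [cpairs, List.rotate]
    rw [cycWeight, hcp] at hw0
    rcases hx with hx | hx <;> rcases hy with hy | hy
    · omega
    · have e1 : cw a b x y = ((0 : ℤ) : WithBot ℤ) := by
        simp only [cw]; split_ifs <;> first | rfl | (exfalso; omega)
      have e2 : cw a b y x = ((-1 : ℤ) : WithBot ℤ) := by
        simp only [cw]; split_ifs <;> first | rfl | (exfalso; omega)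
      simp only [List.map, List.sum_cons, List.sum_nil, e1, e2, add_zero] at hw0
      rw [← WithBot.coe_add, ← WithBot.coe_zero, WithBot.coe_le_coe] at hw0
      omega
    · have e1 : cw a b x y = ((-1 : ℤ) : WithBot ℤ) := by
        simp only [cw]; split_ifs <;> first | rfl | (exfalso; omega)
      have e2 : cw a b y x = ((0 : ℤ) : WithBot ℤ) := by
        simp only [cw]; split_ifs <;> first | rfl | (exfalso; omega)
      simp only [List.map, List.sum_cons, List.sum_nil, e1, e2, add_zero] at hw0
      rw [← WithBot.coe_add, ← WithBot.coe_zero, WithBot.coe_le_coe] at hw0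
      omega
    · omega

theorem stmt10 (n : ℕ) (hn : 3 ≤ n) (a b : ℤ) (ha : 1 ≤ a) (hab : a ≤ b) :
    WeakTriangle (trAlpha (n := n) a b) (trBeta a b) ↔ b ≤ a + 1 := by
  constructor
  · intro hwt
    by_contra hb
    push_neg at hb
    have hb2 : a + 2 ≤ b := by omega
    obtain ⟨i, hi1⟩ : ∃ i : Fin n, i.val = 1 := ⟨⟨1, by omega⟩, rfl⟩
    obtain ⟨j, hj0⟩ : ∃ j : Fin n, j.val = 0 := ⟨⟨0, by omega⟩, rfl⟩
    obtain ⟨k, hk2⟩ : ∃ k : Fin n, k.val = 2 := ⟨⟨2, by omega⟩, rfl⟩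
    have hij : i ≠ j := by rw [Ne, Fin.ext_iff]; omega
    have hjk : j ≠ k := by rw [Ne, Fin.ext_iff]; omega
    have hik : i ≠ k := by rw [Ne, Fin.ext_iff]; omega
    have e12 : cw a b i j = ((a - 1 : ℤ) : WithBot ℤ) := by
      simp only [cw]; split_ifs <;> first | rfl | (exfalso; omega)
    have e23 : cw a b j k = ((0 : ℤ) : WithBot ℤ) := by
      simp only [cw]; split_ifs <;> first | rfl | (exfalso; omega)
    have e13 : cw a b i k = ((b - 1 : ℤ) : WithBot ℤ) := by
      simp only [cw]; split_ifs <;> first | rfl | (exfalso; omega)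
    have h1 : (0 : WithBot ℤ) ≤ cw a b i j := by
      rw [e12, ← WithBot.coe_zero, WithBot.coe_le_coe]; omega
    have h2 : (0 : WithBot ℤ) ≤ cw a b j k := by
      rw [e23, ← WithBot.coe_zero]
    have := hwt (cw a b) (cw_valid a b ha hb2) (cw_acyclic a b ha hb2) i j k hij hjk hik h1 h2
    rw [e12, e23, e13, ← WithBot.coe_one, ← WithBot.coe_add, ← WithBot.coe_add,
      WithBot.coe_le_coe] at this
    omega
  · intro hb w hw hac i j k hij hjk hik h0ij h0jk
    obtain ⟨hloop, hpair⟩ := hw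
    have hijb : w i j ≠ ⊥ := by
      intro h; rw [h, ← WithBot.coe_zero] at h0ij; exact WithBot.not_coe_le_bot _ h0ij
    have hjkb : w j k ≠ ⊥ := by
      intro h; rw [h, ← WithBot.coe_zero] at h0jk; exact WithBot.not_coe_le_bot _ h0jk
    obtain ⟨x, hx⟩ := WithBot.ne_bot_iff_exists.mp hijb
    obtain ⟨y, hy⟩ := WithBot.ne_bot_iff_exists.mp hjkb
    have x0 : 0 ≤ x := by
      rw [← hx, ← WithBot.coe_zero, WithBot.coe_le_coe] at h0ij; exact h0ij
    have y0 : 0 ≤ y := by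
      rw [← hy, ← WithBot.coe_zero, WithBot.coe_le_coe] at h0jk; exact h0jk
    by_cases hikb : w i k = ⊥
    · rw [hikb]; exact bot_le
    obtain ⟨z, hz⟩ := WithBot.ne_bot_iff_exists.mp hikb
    have hzb : z ≤ trBeta a b i k := by
      have h := ((hpair i k hik).1 hikb).2
      rw [← hz, WithBot.coe_le_coe] at h
      exact h
    rw [← hz, ← hx, ← hy, ← WithBot.coe_one, ← WithBot.coe_add, ← WithBot.coe_add,
      WithBot.coe_le_coe]
    by_cases hji : w j i = ⊥
    · have hxbeta : w i j = ((trBeta a b i j : ℤ) : WithBot ℤ) := ((hpair j i hij.symm).2.1).mp hji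
      have hxb : x = trBeta a b i j := by
        rw [← hx, WithBot.coe_inj] at hxbeta; exact hxbeta
      simp only [trBeta] at hzb hxb
      split_ifs at hzb hxb <;> omega
    · by_cases hkj : w k j = ⊥
      · have hybeta : w j k = ((trBeta a b j k : ℤ) : WithBot ℤ) :=
          ((hpair k j hjk.symm).2.1).mp hkj
        have hyb : y = trBeta a b j k := by
          rw [← hy, WithBot.coe_inj] at hybeta; exact hybeta
        simp only [trBeta] at hzb hyb
        split_ifs at hzb hyb <;> omega
      · obtain ⟨x', hx'⟩ := WithBot.ne_bot_iff_exists.mp hji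
        obtain ⟨y', hy'⟩ := WithBot.ne_bot_iff_exists.mp hkj
        have ex' : x' = -1 - x := (hpair i j hij).2.2 x x' hx.symm hx'.symm
        have ey' : y' = -1 - y := (hpair j k hjk).2.2 y y' hy.symm hy'.symm
        have hcp : cpairs [i, k, j] = [(i, k), (k, j), (j, i)] := by
          simp [cpairs, List.rotate]
        have hcycval : cycWeight w [i, k, j] = ((z + (y' + x') : ℤ) : WithBot ℤ) := by
          rw [cycWeight, hcp]
          simp only [List.map_cons, List.map_nil, List.sum_cons, List.sum_nil, add_zero]
          rw [← hz, ← hy', ← hx', ← WithBot.coe_add, ← WithBot.coe_add]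
        have hIsC : IsCycle w [i, k, j] := by
          refine ⟨by simp, by simp [hik, hij, Ne.symm hjk], ?_⟩
          intro p hp
          rw [hcp] at hp
          simp only [List.mem_cons, List.mem_singleton, List.not_mem_nil, or_false] at hp
          rcases hp with rfl | rfl | rfl
          · exact hikb
          · exact hkj
          · exact hji
        have hlt : ¬ (0 : WithBot ℤ) ≤ cycWeight w [i, k, j] := fun h0 => hac [i, k, j] ⟨hIsC, h0⟩
        rw [hcycval, ← WithBot.coe_zero, WithBot.coe_le_coe] at hlt
        omega
end

section
/- Let 𝒜 be a separated contiguous integral deformation of the braid arrangement on {1,…,n} satisfying the weak triangle inequality. Then there exists a valid weight function of 𝒜 containing an m-ascending directed cycle of length four but no m-ascending directed cycle of length less than four, if and only if 𝒜 has a crossing β-pattern, i.e., there exist four pairwise distinct indices i₁, i₂, j₁, j₂ ∈ {1,…,n} with β(i₁,j₁) < β(i₁,j₂) and β(i₂,j₁) > β(i₂,j₂). -/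
namespace Aux12

variable {n : ℕ}

theorem cpairs_fst {c : List (Fin n)} {x : Fin n} (hx : x ∈ c) :
    ∃ p ∈ cpairs c, p.1 = x := by
  have h := List.map_fst_zip (by simp : c.length ≤ (c.rotate 1).length)
  rw [← h] at hx
  rcases List.mem_map.1 hx with ⟨p, hp, hpx⟩
  exact ⟨p, hp, hpx⟩

theorem cpairs_snd {c : List (Fin n)} {x : Fin n} (hx : x ∈ c) :
    ∃ p ∈ cpairs c, p.2 = x := by
  have h := List.map_snd_zip (by simp : (c.rotate 1).length ≤ c.length)
  have hx' : x ∈ c.rotate 1 := List.mem_rotate.2 hx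
  rw [← h] at hx'
  rcases List.mem_map.1 hx' with ⟨p, hp, hpx⟩
  exact ⟨p, hp, hpx⟩

theorem mem_of_cpairs {c : List (Fin n)} {p : Fin n × Fin n} (hp : p ∈ cpairs c) :
    p.1 ∈ c ∧ p.2 ∈ c := by
  have h := List.of_mem_zip hp
  exact ⟨h.1, List.mem_rotate.1 h.2⟩

theorem length_cpairs (c : List (Fin n)) : (cpairs c).length = c.length := by
  simp [cpairs]

theorem sum_map_sub {α : Type*} (f g : α → ℤ) (L : List α) :
    (L.map fun x => f x - g x).sum = (L.map f).sum - (L.map g).sum := by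
  induction L with
  | nil => simp
  | cons x t ih => simp [ih]; ring

theorem sum_rotate (l : List ℤ) : (l.rotate 1).sum = l.sum := by
  rcases l with _ | ⟨x, t⟩
  · simp
  · rw [List.rotate_eq_drop_append_take (by simp)]
    simp [List.sum_append]; ring

theorem telescope (φ : Fin n → ℤ) (c : List (Fin n)) :
    ((cpairs c).map fun p => φ p.1 - φ p.2).sum = 0 := by
  have h1 : ((cpairs c).map fun p => φ p.1 - φ p.2).sum
      = ((cpairs c).map fun p => φ p.1).sum - ((cpairs c).map fun p => φ p.2).sum :=
    sum_map_sub _ _ _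
  have h2 : ((cpairs c).map fun p => φ p.1) = c.map φ := by
    have := List.map_fst_zip (by simp : c.length ≤ (c.rotate 1).length)
    calc ((cpairs c).map fun p => φ p.1) = ((cpairs c).map Prod.fst).map φ := by
          rw [List.map_map]; rfl
      _ = c.map φ := by rw [cpairs] at *; rw [this]
  have h3 : ((cpairs c).map fun p => φ p.2) = (c.map φ).rotate 1 := by
    have := List.map_snd_zip (by simp : (c.rotate 1).length ≤ c.length)
    calc ((cpairs c).map fun p => φ p.2) = ((cpairs c).map Prod.snd).map φ := by
          rw [List.map_map]; rfl
      _ = (c.rotate 1).map φ := by rw [cpairs] at *; rw [this]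
      _ = (c.map φ).rotate 1 := List.map_rotate φ c 1
  rw [h1, h2, h3, sum_rotate]
  ring

theorem key_sum (w : Fin n → Fin n → WithBot ℤ) (θ : Fin n × Fin n → ℤ) :
    ∀ L : List (Fin n × Fin n),
      (∀ p ∈ L, ∃ x : ℤ, w p.1 p.2 = (x : WithBot ℤ) ∧ 2 * x ≤ θ p) →
      ∃ X : ℤ, (L.map fun p => w p.1 p.2).sum = (X : WithBot ℤ) ∧ 2 * X ≤ (L.map θ).sum := by
  intro L
  induction L with
  | nil => intro _; exact ⟨0, by simp, by simp⟩
  | cons p t ih =>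
    intro h
    rcases h p (by simp) with ⟨x, hx, hxb⟩
    rcases ih (fun q hq => h q (by simp [hq])) with ⟨X, hX, hXb⟩
    refine ⟨x + X, ?_, ?_⟩
    · rw [List.map_cons, List.sum_cons, hx, hX, ← WithBot.coe_add]
    · simp only [List.map_cons, List.sum_cons]
      omega

theorem allzero (L : List ℤ) (h : ∀ x ∈ L, 0 ≤ x) (h0 : L.sum ≤ 0) : ∀ x ∈ L, x = 0 := by
  induction L with
  | nil => simp
  | cons y t ih =>
    have hy := h y (by simp)
    have ht : t.sum ≤ 0 := by
      have : 0 ≤ t.sum → t.sum ≤ 0 := by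
        intro _; have := List.sum_cons (a := y) (l := t); omega
      have htn : 0 ≤ t.sum := List.sum_nonneg (fun x hx => h x (by simp [hx]))
      exact this htn
    intro x hx
    rcases List.mem_cons.1 hx with rfl | hx'
    · have htn : 0 ≤ t.sum := List.sum_nonneg (fun z hz => h z (by simp [hz]))
      have := List.sum_cons (a := x) (l := t)
      omega
    · exact ih (fun z hz => h z (by simp [hz])) ht x hx'

theorem confine (S : Finset (Fin n)) (w : Fin n → Fin n → WithBot ℤ) (ρ : Fin n → ℤ)
    (hSρ : ∀ u, u ∈ S → ρ u = 0)
    (h : ∀ u v, w u v ≠ ⊥ → (u ∈ S ∧ v ∈ S) ∨ ρ v < ρ u)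
    {c : List (Fin n)} (hc : IsCycle w c) : ∀ x ∈ c, x ∈ S := by
  have hsum : ((cpairs c).map fun p => ρ p.1 - ρ p.2).sum = 0 := telescope ρ c
  have hnn : ∀ z ∈ (cpairs c).map fun p => ρ p.1 - ρ p.2, 0 ≤ z := by
    intro z hz
    rcases List.mem_map.1 hz with ⟨p, hp, rfl⟩
    rcases h p.1 p.2 (hc.2.2 p hp) with ⟨h1, h2⟩ | hlt
    · rw [hSρ _ h1, hSρ _ h2]; omega
    · omega
  have hall := allzero _ hnn (le_of_eq hsum)
  have hedge : ∀ p ∈ cpairs c, p.1 ∈ S ∧ p.2 ∈ S := by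
    intro p hp
    have hz := hall _ (List.mem_map.2 ⟨p, hp, rfl⟩)
    rcases h p.1 p.2 (hc.2.2 p hp) with hgood | hlt
    · exact hgood
    · omega
  intro x hx
  rcases cpairs_fst hx with ⟨p, hp, rfl⟩
  exact (hedge p hp).1


theorem sum_map_one {α : Type*} (L : List α) : (L.map fun _ => (1 : ℤ)).sum = L.length := by
  induction L with
  | nil => simp
  | cons x t ih => simp [ih]; ring

theorem no_asc_of_pot (w : Fin n → Fin n → WithBot ℤ) (ψ : Fin n → ℤ) {c : List (Fin n)}
    (hc : IsCycle w c)
    (h : ∀ p ∈ cpairs c, ∃ x : ℤ, w p.1 p.2 = (x : WithBot ℤ) ∧ 2 * x ≤ ψ p.1 - ψ p.2 - 1) :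
    ¬ (0 ≤ cycWeight w c) := by
  rcases key_sum w (fun p => ψ p.1 - ψ p.2 - 1) (cpairs c) h with ⟨X, hX, hXb⟩
  have hθ : ((cpairs c).map fun p => ψ p.1 - ψ p.2 - 1).sum
      = ((cpairs c).map fun p => ψ p.1 - ψ p.2).sum - ((cpairs c).map fun _ => (1:ℤ)).sum :=
    sum_map_sub _ _ _
  rw [telescope, sum_map_one, length_cpairs] at hθ
  have hlen : 2 ≤ c.length := hc.1
  intro h0
  rw [cycWeight, hX] at h0
  have hX0 : (0 : ℤ) ≤ X := by exact_mod_cast h0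
  omega

theorem no_asc_two {a b : Fin n → Fin n → ℤ} {w : Fin n → Fin n → WithBot ℤ}
    (hw : ValidW a b w) (c : List (Fin n)) (h2 : c.length = 2) : ¬ MAscending w c := by
  rcases c with _ | ⟨u, _ | ⟨v, _ | ⟨z, t⟩⟩⟩ <;> simp at h2
  rintro ⟨⟨-, hnd, hedge⟩, hsum⟩
  have hne : u ≠ v := by simp at hnd; exact hnd
  have hcp : cpairs [u, v] = [(u, v), (v, u)] := by
    simp [cpairs, List.rotate_cons_succ]
  have h1 : w u v ≠ ⊥ := hedge (u, v) (by rw [hcp]; simp)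
  have h2' : w v u ≠ ⊥ := hedge (v, u) (by rw [hcp]; simp)
  rcases WithBot.ne_bot_iff_exists.1 h1 with ⟨x, hx⟩
  rcases WithBot.ne_bot_iff_exists.1 h2' with ⟨y, hy⟩
  have hlin := ((hw.2 u v hne).2.2) x y hx.symm hy.symm
  rw [cycWeight, hcp] at hsum
  simp only [List.map_cons, List.map_nil, List.sum_cons, List.sum_nil, ← hx, ← hy] at hsum
  have : (0:ℤ) ≤ x + (y + 0) := by exact_mod_cast hsum
  omega

def PairOK (a b : Fin n → Fin n → ℤ) (w : Fin n → Fin n → WithBot ℤ) (u v : Fin n) : Prop :=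
  (w u v ≠ ⊥ → (a u v : WithBot ℤ) ≤ w u v ∧ w u v ≤ (b u v : WithBot ℤ)) ∧
  (w u v = ⊥ ↔ w v u = (b v u : WithBot ℤ)) ∧
  (∀ x y : ℤ, w u v = (x : WithBot ℤ) → w v u = (y : WithBot ℤ) → y = -1 - x)

theorem validW_iff (a b : Fin n → Fin n → ℤ) (w : Fin n → Fin n → WithBot ℤ) :
    ValidW a b w ↔ (∀ i, w i i = ⊥) ∧ ∀ i j, i ≠ j → PairOK a b w i j := Iff.rfl

def base (b : Fin n → Fin n → ℤ) (S : Finset (Fin n)) (ws : Fin n → Fin n → WithBot ℤ) :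
    Fin n → Fin n → WithBot ℤ := fun u v =>
  if u = v then ⊥
  else if u ∈ S then (if v ∈ S then ws u v else ⊥)
  else if v ∈ S then (b u v : WithBot ℤ)
  else if v < u then (b u v : WithBot ℤ) else ⊥

variable {b : Fin n → Fin n → ℤ} {S : Finset (Fin n)} {ws : Fin n → Fin n → WithBot ℤ}

theorem base_inS {u v : Fin n} (huv : u ≠ v) (hu : u ∈ S) (hv : v ∈ S) :
    base b S ws u v = ws u v := by simp [base, huv, hu, hv]

theorem base_so {u v : Fin n} (hu : u ∈ S) (hv : v ∉ S) : base b S ws u v = ⊥ := by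
  have huv : u ≠ v := fun h => hv (h ▸ hu)
  simp [base, huv, hu, hv]

theorem base_os {u v : Fin n} (hu : u ∉ S) (hv : v ∈ S) :
    base b S ws u v = (b u v : WithBot ℤ) := by
  have huv : u ≠ v := fun h => hu (h ▸ hv)
  simp [base, huv, hu, hv]

theorem base_oo_lt {u v : Fin n} (hu : u ∉ S) (hv : v ∉ S) (h : v < u) :
    base b S ws u v = (b u v : WithBot ℤ) := by
  have huv : u ≠ v := (ne_of_lt h).symm
  simp [base, huv, hu, hv, h]

theorem base_oo_nlt {u v : Fin n} (hu : u ∉ S) (hv : v ∉ S) (h : ¬ v < u) :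
    base b S ws u v = ⊥ := by
  by_cases huv : u = v
  · simp [base, huv]
  · simp [base, huv, hu, hv, h]

theorem base_valid {a : Fin n → Fin n → ℤ}
    (hab' : ∀ u v : Fin n, u ≠ v → a u v ≤ b u v)
    (hS : ∀ u v, u ∈ S → v ∈ S → u ≠ v → PairOK a b (base b S ws) u v) :
    ValidW a b (base b S ws) := by
  rw [validW_iff]
  constructor
  · intro i; simp [base]
  intro i j hne
  by_cases hi : i ∈ S <;> by_cases hj : j ∈ S
  · exact hS i j hi hj hne
  · refine ⟨fun h => absurd (base_so hi hj) h, ?_, ?_⟩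
    · rw [base_so hi hj, base_os hj hi]; simp
    · intro x y hx; rw [base_so hi hj] at hx; exact absurd hx.symm (by simp)
  · refine ⟨fun _ => ?_, ?_, ?_⟩
    · rw [base_os hi hj]
      exact ⟨by exact_mod_cast hab' i j hne, le_refl _⟩
    · rw [base_os hi hj, base_so hj hi]
      simp
    · intro x y _ hy; rw [base_so hj hi] at hy; exact absurd hy.symm (by simp)
  · rcases lt_or_gt_of_ne hne with hlt | hgt
    · refine ⟨fun h => absurd (base_oo_nlt hi hj (asymm hlt)) h, ?_, ?_⟩
      · rw [base_oo_nlt hi hj (asymm hlt), base_oo_lt hj hi hlt]; simp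
      · intro x y hx; rw [base_oo_nlt hi hj (asymm hlt)] at hx
        exact absurd hx.symm (by simp)
    · refine ⟨fun _ => ?_, ?_, ?_⟩
      · rw [base_oo_lt hi hj hgt]
        exact ⟨by exact_mod_cast hab' i j hne, le_refl _⟩
      · rw [base_oo_lt hi hj hgt, base_oo_nlt hj hi (asymm hgt)]
        simp
      · intro x y _ hy; rw [base_oo_nlt hj hi (asymm hgt)] at hy
        exact absurd hy.symm (by simp)

theorem base_conf : ∀ u v : Fin n, base b S ws u v ≠ ⊥ →
    (u ∈ S ∧ v ∈ S) ∨
      ((if v ∈ S then (0:ℤ) else (v : ℤ) + 1) < if u ∈ S then (0:ℤ) else (u : ℤ) + 1) := by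
  intro u v h
  by_cases hi : u ∈ S <;> by_cases hj : v ∈ S
  · exact Or.inl ⟨hi, hj⟩
  · exact absurd (base_so hi hj) h
  · right; simp only [hi, hj, if_true, if_false]
    have : (0:ℤ) ≤ (u : ℤ) := by exact_mod_cast Nat.zero_le _
    omega
  · right
    by_cases hlt : v < u
    · simp only [hi, hj, if_false]
      have : (v : ℕ) < (u : ℕ) := hlt
      omega
    · exact absurd (base_oo_nlt hi hj hlt) h


section Main

variable {a b : Fin n → Fin n → ℤ}

theorem hba (hsym : ∀ i j : Fin n, i < j → a j i = -(b i j) ∧ b j i = -(a i j)) :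
    ∀ u v : Fin n, u ≠ v → a u v = -(b v u) := by
  intro u v h
  rcases lt_or_gt_of_ne h with hlt | hgt
  · have := (hsym u v hlt).2; omega
  · exact (hsym v u hgt).1

theorem hb0 (hsym : ∀ i j : Fin n, i < j → a j i = -(b i j) ∧ b j i = -(a i j))
    (hsep : ∀ i j : Fin n, i < j → a i j ≤ 0 ∧ 0 ≤ b i j) :
    ∀ u v : Fin n, u ≠ v → 0 ≤ b u v := by
  intro u v h
  rcases lt_or_gt_of_ne h with hlt | hgt
  · exact (hsep u v hlt).2
  · have := (hsym v u hgt).2; have := (hsep v u hgt).1; omega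

theorem ha0 (hsym : ∀ i j : Fin n, i < j → a j i = -(b i j) ∧ b j i = -(a i j))
    (hsep : ∀ i j : Fin n, i < j → a i j ≤ 0 ∧ 0 ≤ b i j) :
    ∀ u v : Fin n, u ≠ v → a u v ≤ 0 := by
  intro u v h
  rcases lt_or_gt_of_ne h with hlt | hgt
  · exact (hsep u v hlt).1
  · have := hba hsym u v h
    have := hb0 hsym hsep v u h.symm
    omega

theorem hab' (hsym : ∀ i j : Fin n, i < j → a j i = -(b i j) ∧ b j i = -(a i j))
    (hsep : ∀ i j : Fin n, i < j → a i j ≤ 0 ∧ 0 ≤ b i j) :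
    ∀ u v : Fin n, u ≠ v → a u v ≤ b u v := fun u v h =>
  le_trans (ha0 hsym hsep u v h) (hb0 hsym hsep u v h)

/-- one-way pair: `w u v = b u v`, `w v u = ⊥`. -/
theorem pair_oneway {w : Fin n → Fin n → WithBot ℤ} {u v : Fin n}
    (hauv : a u v ≤ b u v)
    (h1 : w u v = (b u v : WithBot ℤ)) (h2 : w v u = ⊥) :
    PairOK a b w u v ∧ PairOK a b w v u := by
  refine ⟨⟨fun _ => ?_, ?_, ?_⟩, ⟨fun h => absurd h2 h, ?_, ?_⟩⟩
  · rw [h1]; exact ⟨by exact_mod_cast hauv, le_refl _⟩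
  · rw [h1, h2]; simp
  · intro x y _ hy; rw [h2] at hy; exact absurd hy.symm (by simp)
  · rw [h1, h2]; simp
  · intro x y hx; rw [h2] at hx; exact absurd hx.symm (by simp)

/-- zero-pair: `w u v = 0`, `w v u = -1` if `1 ≤ b u v`, else `⊥`. -/
theorem pair_zero {w : Fin n → Fin n → WithBot ℤ} {u v : Fin n}
    (h0 : 0 ≤ b u v) (h0' : 0 ≤ b v u) (hvua : a v u = -(b u v)) (hauv : a u v ≤ 0)
    (h1 : w u v = ((0 : ℤ) : WithBot ℤ))
    (h2 : w v u = if 1 ≤ b u v then ((-1 : ℤ) : WithBot ℤ) else ⊥) :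
    PairOK a b w u v ∧ PairOK a b w v u := by
  by_cases hc : 1 ≤ b u v
  · rw [if_pos hc] at h2
    refine ⟨⟨fun _ => ?_, ?_, ?_⟩, ⟨fun _ => ?_, ?_, ?_⟩⟩
    · rw [h1]; exact ⟨by exact_mod_cast hauv, by exact_mod_cast h0⟩
    · rw [h1, h2]
      constructor
      · intro h; exact absurd h (by simp)
      · intro h; rw [WithBot.coe_inj] at h; omega
    · intro x y hx hy
      rw [h1] at hx; rw [h2] at hy
      rw [WithBot.coe_inj] at hx hy; omega
    · rw [h2]
      exact ⟨WithBot.coe_le_coe.2 (by omega), WithBot.coe_le_coe.2 (by omega)⟩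
    · rw [h1, h2]
      constructor
      · intro h; exact absurd h (by simp)
      · intro h; rw [WithBot.coe_inj] at h; omega
    · intro x y hx hy
      rw [h2] at hx; rw [h1] at hy
      rw [WithBot.coe_inj] at hx hy; omega
  · have hb0uv : b u v = 0 := by omega
    rw [if_neg hc] at h2
    refine ⟨⟨fun _ => ?_, ?_, ?_⟩, ⟨fun h => absurd h2 h, ?_, ?_⟩⟩
    · rw [h1]; exact ⟨by exact_mod_cast hauv, by exact_mod_cast h0⟩
    · rw [h1, h2]
      constructor
      · intro h; exact absurd h (by simp)
      · intro h; exact absurd h.symm (by simp)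
    · intro x y hx hy
      rw [h2] at hy; exact absurd hy.symm (by simp)
    · rw [h2, h1, hb0uv]; simp
    · intro x y hx; rw [h2] at hx; exact absurd hx.symm (by simp)


def ws1 (b : Fin n → Fin n → ℤ) (i j k : Fin n) : Fin n → Fin n → WithBot ℤ := fun u v =>
  if u = i then (if v = j then ((b i j : ℤ) : WithBot ℤ) else if v = k then ((b i k : ℤ) : WithBot ℤ) else ⊥)
  else if u = j then (if v = k then ((0 : ℤ) : WithBot ℤ) else ⊥)
  else if u = k then (if v = j then (if 1 ≤ b j k then ((-1 : ℤ) : WithBot ℤ) else ⊥) else ⊥)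
  else ⊥

theorem lip1 (hsym : ∀ i j : Fin n, i < j → a j i = -(b i j) ∧ b j i = -(a i j))
    (hsep : ∀ i j : Fin n, i < j → a i j ≤ 0 ∧ 0 ≤ b i j)
    (hwt : WeakTriangle a b) {i j k : Fin n}
    (hij : i ≠ j) (hjk : j ≠ k) (hik : i ≠ k) : b i k ≤ b i j + 1 := by
  set S : Finset (Fin n) := {i, j, k} with hSdef
  have hiS : i ∈ S := by simp [hSdef]
  have hjS : j ∈ S := by simp [hSdef]
  have hkS : k ∈ S := by simp [hSdef]
  set w : Fin n → Fin n → WithBot ℤ := base b S (ws1 b i j k) with hwdef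
  have hwij : w i j = ((b i j : ℤ) : WithBot ℤ) := by
    rw [hwdef, base_inS hij hiS hjS]; simp [ws1, hij, hjk, hik, Ne.symm hij, Ne.symm hjk, Ne.symm hik]
  have hwji : w j i = ⊥ := by
    rw [hwdef, base_inS (Ne.symm hij) hjS hiS]; simp [ws1, hij, hjk, hik, Ne.symm hij, Ne.symm hjk, Ne.symm hik]
  have hwjk : w j k = ((0 : ℤ) : WithBot ℤ) := by
    rw [hwdef, base_inS hjk hjS hkS]; simp [ws1, hij, hjk, hik, Ne.symm hij, Ne.symm hjk, Ne.symm hik]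
  have hwkj : w k j = (if 1 ≤ b j k then ((-1 : ℤ) : WithBot ℤ) else ⊥) := by
    rw [hwdef, base_inS (Ne.symm hjk) hkS hjS]; simp [ws1, hij, hjk, hik, Ne.symm hij, Ne.symm hjk, Ne.symm hik]
  have hwik : w i k = ((b i k : ℤ) : WithBot ℤ) := by
    rw [hwdef, base_inS hik hiS hkS]; simp [ws1, hij, hjk, hik, Ne.symm hij, Ne.symm hjk, Ne.symm hik]
  have hwki : w k i = ⊥ := by
    rw [hwdef, base_inS (Ne.symm hik) hkS hiS]; simp [ws1, hij, hjk, hik, Ne.symm hij, Ne.symm hjk, Ne.symm hik]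
  have hval : ValidW a b w := by
    refine base_valid (hab' hsym hsep) ?_
    intro u v hu hv huv
    rw [hSdef] at hu hv
    simp only [Finset.mem_insert, Finset.mem_singleton] at hu hv
    have Pij := pair_oneway (a := a) (hab' hsym hsep i j hij) hwij hwji
    have Pik := pair_oneway (a := a) (hab' hsym hsep i k hik) hwik hwki
    have Pjk := pair_zero (a := a) (hb0 hsym hsep j k hjk) (hb0 hsym hsep k j (Ne.symm hjk))
      (hba hsym k j (Ne.symm hjk)) (ha0 hsym hsep j k hjk) hwjk hwkj
    rcases hu with rfl | rfl | rfl <;> rcases hv with rfl | rfl | rfl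
    · exact absurd rfl huv
    · exact Pij.1
    · exact Pik.1
    · exact Pij.2
    · exact absurd rfl huv
    · exact Pjk.1
    · exact Pik.2
    · exact Pjk.2
    · exact absurd rfl huv
  have hmac : MAcyclic w := by
    intro c hasc
    obtain ⟨hcyc, hsum⟩ := hasc
    have hin : ∀ x ∈ c, x ∈ S := by
      refine confine S w (fun u => if u ∈ S then 0 else (u : ℤ) + 1)
        (fun u hu => by simp [hu]) ?_ hcyc
      intro u v hne'
      exact base_conf u v hne'
    set ψ : Fin n → ℤ := fun v' => if v' = i then 2 * (b i j + b i k) + 2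
      else if v' = j then 1 else 0 with hψdef
    refine no_asc_of_pot w ψ hcyc ?_ hsum
    have h0ik := hb0 hsym hsep i k hik
    have h0ij := hb0 hsym hsep i j hij
    have HS : ∀ u v : Fin n, u ∈ S → v ∈ S → w u v ≠ ⊥ →
        ∃ x : ℤ, w u v = (x : WithBot ℤ) ∧ 2 * x ≤ ψ u - ψ v - 1 := by
      intro u v hu hv hne'
      rw [hSdef] at hu hv
      simp only [Finset.mem_insert, Finset.mem_singleton] at hu hv
      have hψi : ψ i = 2 * (b i j + b i k) + 2 := by simp [hψdef]
      have hψj : ψ j = 1 := by simp [hψdef, Ne.symm hij]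
      have hψk : ψ k = 0 := by simp [hψdef, Ne.symm hik, Ne.symm hjk]
      rcases hu with rfl | rfl | rfl <;> rcases hv with rfl | rfl | rfl
      · exact absurd (by rw [hwdef]; simp [base]) hne'
      · exact ⟨b u v, hwij, by rw [hψi, hψj]; omega⟩
      · exact ⟨b u v, hwik, by rw [hψi, hψk]; omega⟩
      · exact absurd hwji hne'
      · exact absurd (by rw [hwdef]; simp [base]) hne'
      · exact ⟨0, hwjk, by rw [hψj, hψk]; omega⟩
      · exact absurd hwki hne'
      · by_cases hc : 1 ≤ b v u
        · exact ⟨-1, by rw [hwkj, if_pos hc], by rw [hψk, hψj]; omega⟩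
        · exact absurd (by rw [hwkj, if_neg hc]) hne'
      · exact absurd (by rw [hwdef]; simp [base]) hne'
    intro p hp
    exact HS p.1 p.2 (hin _ (mem_of_cpairs hp).1) (hin _ (mem_of_cpairs hp).2) (hcyc.2.2 p hp)
  have hmain := hwt w hval hmac i j k hij hjk hik
    (by rw [hwij]; exact_mod_cast hb0 hsym hsep i j hij)
    (by rw [hwjk]; exact_mod_cast le_refl (0 : ℤ))
  rw [hwik, hwij, hwjk] at hmain
  have hcast : ((b i j : ℤ) : WithBot ℤ) + ((0 : ℤ) : WithBot ℤ) + 1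
      = ((b i j + 0 + 1 : ℤ) : WithBot ℤ) := by push_cast; ring
  rw [hcast] at hmain
  have := WithBot.coe_le_coe.1 hmain
  omega

def ws2 (b : Fin n → Fin n → ℤ) (i j k : Fin n) : Fin n → Fin n → WithBot ℤ := fun u v =>
  if u = i then (if v = j then ((0 : ℤ) : WithBot ℤ) else if v = k then ((b i k : ℤ) : WithBot ℤ) else ⊥)
  else if u = j then (if v = i then (if 1 ≤ b i j then ((-1 : ℤ) : WithBot ℤ) else ⊥)
    else if v = k then ((b j k : ℤ) : WithBot ℤ) else ⊥)
  else ⊥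

theorem lip2 (hsym : ∀ i j : Fin n, i < j → a j i = -(b i j) ∧ b j i = -(a i j))
    (hsep : ∀ i j : Fin n, i < j → a i j ≤ 0 ∧ 0 ≤ b i j)
    (hwt : WeakTriangle a b) {i j k : Fin n}
    (hij : i ≠ j) (hjk : j ≠ k) (hik : i ≠ k) : b i k ≤ b j k + 1 := by
  set S : Finset (Fin n) := {i, j, k} with hSdef
  have hiS : i ∈ S := by simp [hSdef]
  have hjS : j ∈ S := by simp [hSdef]
  have hkS : k ∈ S := by simp [hSdef]
  set w : Fin n → Fin n → WithBot ℤ := base b S (ws2 b i j k) with hwdef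
  have hwij : w i j = ((0 : ℤ) : WithBot ℤ) := by
    rw [hwdef, base_inS hij hiS hjS]; simp [ws2, hij, hjk, hik, Ne.symm hij, Ne.symm hjk, Ne.symm hik]
  have hwji : w j i = (if 1 ≤ b i j then ((-1 : ℤ) : WithBot ℤ) else ⊥) := by
    rw [hwdef, base_inS (Ne.symm hij) hjS hiS]; simp [ws2, hij, hjk, hik, Ne.symm hij, Ne.symm hjk, Ne.symm hik]
  have hwjk : w j k = ((b j k : ℤ) : WithBot ℤ) := by
    rw [hwdef, base_inS hjk hjS hkS]; simp [ws2, hij, hjk, hik, Ne.symm hij, Ne.symm hjk, Ne.symm hik]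
  have hwkj : w k j = ⊥ := by
    rw [hwdef, base_inS (Ne.symm hjk) hkS hjS]; simp [ws2, hij, hjk, hik, Ne.symm hij, Ne.symm hjk, Ne.symm hik]
  have hwik : w i k = ((b i k : ℤ) : WithBot ℤ) := by
    rw [hwdef, base_inS hik hiS hkS]; simp [ws2, hij, hjk, hik, Ne.symm hij, Ne.symm hjk, Ne.symm hik]
  have hwki : w k i = ⊥ := by
    rw [hwdef, base_inS (Ne.symm hik) hkS hiS]; simp [ws2, hij, hjk, hik, Ne.symm hij, Ne.symm hjk, Ne.symm hik]
  have hval : ValidW a b w := by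
    refine base_valid (hab' hsym hsep) ?_
    intro u v hu hv huv
    rw [hSdef] at hu hv
    simp only [Finset.mem_insert, Finset.mem_singleton] at hu hv
    have Pij := pair_zero (a := a) (hb0 hsym hsep i j hij) (hb0 hsym hsep j i (Ne.symm hij))
      (hba hsym j i (Ne.symm hij)) (ha0 hsym hsep i j hij) hwij hwji
    have Pik := pair_oneway (a := a) (hab' hsym hsep i k hik) hwik hwki
    have Pjk := pair_oneway (a := a) (hab' hsym hsep j k hjk) hwjk hwkj
    rcases hu with rfl | rfl | rfl <;> rcases hv with rfl | rfl | rfl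
    · exact absurd rfl huv
    · exact Pij.1
    · exact Pik.1
    · exact Pij.2
    · exact absurd rfl huv
    · exact Pjk.1
    · exact Pik.2
    · exact Pjk.2
    · exact absurd rfl huv
  have hmac : MAcyclic w := by
    intro c hasc
    obtain ⟨hcyc, hsum⟩ := hasc
    have hin : ∀ x ∈ c, x ∈ S := by
      refine confine S w (fun u => if u ∈ S then 0 else (u : ℤ) + 1)
        (fun u hu => by simp [hu]) ?_ hcyc
      intro u v hne'
      exact base_conf u v hne'
    set ψ : Fin n → ℤ := fun v' => if v' = i then 1
      else if v' = j then 0 else -(2 * (b j k + b i k) + 2) with hψdef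
    refine no_asc_of_pot w ψ hcyc ?_ hsum
    have h0ik := hb0 hsym hsep i k hik
    have h0jk := hb0 hsym hsep j k hjk
    have HS : ∀ u v : Fin n, u ∈ S → v ∈ S → w u v ≠ ⊥ →
        ∃ x : ℤ, w u v = (x : WithBot ℤ) ∧ 2 * x ≤ ψ u - ψ v - 1 := by
      intro u v hu hv hne'
      rw [hSdef] at hu hv
      simp only [Finset.mem_insert, Finset.mem_singleton] at hu hv
      have hψi : ψ i = 1 := by simp [hψdef]
      have hψj : ψ j = 0 := by simp [hψdef, Ne.symm hij]
      have hψk : ψ k = -(2 * (b j k + b i k) + 2) := by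
        simp [hψdef, Ne.symm hik, Ne.symm hjk]
      rcases hu with rfl | rfl | rfl <;> rcases hv with rfl | rfl | rfl
      · exact absurd (by rw [hwdef]; simp [base]) hne'
      · exact ⟨0, hwij, by rw [hψi, hψj]; omega⟩
      · exact ⟨b u v, hwik, by rw [hψi, hψk]; omega⟩
      · by_cases hc : 1 ≤ b v u
        · exact ⟨-1, by rw [hwji, if_pos hc], by rw [hψj, hψi]; omega⟩
        · exact absurd (by rw [hwji, if_neg hc]) hne'
      · exact absurd (by rw [hwdef]; simp [base]) hne'
      · exact ⟨b u v, hwjk, by rw [hψj, hψk]; omega⟩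
      · exact absurd hwki hne'
      · exact absurd hwkj hne'
      · exact absurd (by rw [hwdef]; simp [base]) hne'
    intro p hp
    exact HS p.1 p.2 (hin _ (mem_of_cpairs hp).1) (hin _ (mem_of_cpairs hp).2) (hcyc.2.2 p hp)
  have hmain := hwt w hval hmac i j k hij hjk hik
    (by rw [hwij]; exact_mod_cast le_refl (0 : ℤ))
    (by rw [hwjk]; exact_mod_cast hb0 hsym hsep j k hjk)
  rw [hwik, hwij, hwjk] at hmain
  have hcast : ((0 : ℤ) : WithBot ℤ) + ((b j k : ℤ) : WithBot ℤ) + 1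
      = ((0 + b j k + 1 : ℤ) : WithBot ℤ) := by push_cast; ring
  rw [hcast] at hmain
  have := WithBot.coe_le_coe.1 hmain
  omega


theorem fwd_core (hsym : ∀ i j : Fin n, i < j → a j i = -(b i j) ∧ b j i = -(a i j))
    (hsep : ∀ i j : Fin n, i < j → a i j ≤ 0 ∧ 0 ≤ b i j)
    (hwt : WeakTriangle a b)
    {w : Fin n → Fin n → WithBot ℤ} (hval : ValidW a b w)
    (hno3 : ∀ c : List (Fin n), MAscending w c → ¬ c.length < 4)
    {y₁ y₂ y₃ y₄ : Fin n}
    (h12 : y₁ ≠ y₂) (h13 : y₁ ≠ y₃) (h14 : y₁ ≠ y₄)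
    (h23 : y₂ ≠ y₃) (h24 : y₂ ≠ y₄) (h34 : y₃ ≠ y₄)
    {f₀ f₁ f₂ f₃ : ℤ}
    (hf0 : w y₁ y₂ = (f₀ : WithBot ℤ)) (hf1 : w y₂ y₃ = (f₁ : WithBot ℤ))
    (hf2 : w y₃ y₄ = (f₂ : WithBot ℤ)) (hf3 : w y₄ y₁ = (f₃ : WithBot ℤ))
    (hS : 0 ≤ f₀ + f₁ + f₂ + f₃)
    (hc02 : w y₁ y₃ ≠ ⊥) (hc31 : w y₄ y₂ ≠ ⊥) :
    ∃ i₁ i₂ j₁ j₂ : Fin n, i₁ ≠ i₂ ∧ i₁ ≠ j₁ ∧ i₁ ≠ j₂ ∧ i₂ ≠ j₁ ∧ i₂ ≠ j₂ ∧ j₁ ≠ j₂ ∧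
      b i₁ j₁ < b i₁ j₂ ∧ b i₂ j₂ < b i₂ j₁ := by
  have tri : ∀ u v z : Fin n, u ≠ v → v ≠ z → u ≠ z → ∀ x y t : ℤ,
      w u v = (x : WithBot ℤ) → w v z = (y : WithBot ℤ) → w z u = (t : WithBot ℤ) →
      x + y + t < 0 := by
    intro u v z huv hvz huz x y t hx hy ht
    by_contra hge
    push_neg at hge
    have hcp : cpairs [u, v, z] = [(u, v), (v, z), (z, u)] := by
      simp [cpairs, List.rotate_cons_succ]
    refine hno3 [u, v, z] ⟨⟨by simp, ?_, ?_⟩, ?_⟩ (by simp)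
    · simp [List.nodup_cons, huv, hvz, huz]
    · intro p hp
      rw [hcp] at hp
      simp only [List.mem_cons, List.not_mem_nil, or_false] at hp
      rcases hp with h | h | h
      · rw [h]; simp [hx]
      · rw [h]; simp [hy]
      · rw [h]; simp [ht]
    · rw [cycWeight, hcp]
      simp only [List.map_cons, List.map_nil, List.sum_cons, List.sum_nil, hx, hy, ht,
        add_zero, ← WithBot.coe_add]
      exact_mod_cast (by omega : (0:ℤ) ≤ x + (y + t))
  -- chords are one-way
  have hbot31 : w y₃ y₁ = ⊥ := by
    by_contra hne
    rcases WithBot.ne_bot_iff_exists.1 hc02 with ⟨g, hg⟩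
    rcases WithBot.ne_bot_iff_exists.1 hne with ⟨g', hg'⟩
    have t1 := tri y₁ y₃ y₄ h13 h34 h14 g f₂ f₃ hg.symm hf2 hf3
    have t2 := tri y₃ y₁ y₂ (Ne.symm h13) h12 (Ne.symm h23) g' f₀ f₁ hg'.symm hf0 hf1
    have hlin := (hval.2 y₁ y₃ h13).2.2 g g' hg.symm hg'.symm
    omega
  have hc02v : w y₁ y₃ = ((b y₁ y₃ : ℤ) : WithBot ℤ) :=
    (hval.2 y₃ y₁ (Ne.symm h13)).2.1.1 hbot31
  have hbot24 : w y₂ y₄ = ⊥ := by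
    by_contra hne
    rcases WithBot.ne_bot_iff_exists.1 hc31 with ⟨g, hg⟩
    rcases WithBot.ne_bot_iff_exists.1 hne with ⟨g', hg'⟩
    have t1 := tri y₄ y₂ y₃ (Ne.symm h24) h23 (Ne.symm h34) g f₁ f₂ hg.symm hf1 hf2
    have t2 := tri y₂ y₄ y₁ h24 (Ne.symm h14) (Ne.symm h12) g' f₃ f₀ hg'.symm hf3 hf0
    have hlin := (hval.2 y₄ y₂ (Ne.symm h24)).2.2 g g' hg.symm hg'.symm
    omega
  have hc31v : w y₄ y₂ = ((b y₄ y₂ : ℤ) : WithBot ℤ) :=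
    (hval.2 y₂ y₄ h24).2.1.1 hbot24
  -- triangle inequalities
  have T1 := tri y₁ y₃ y₄ h13 h34 h14 (b y₁ y₃) f₂ f₃ hc02v hf2 hf3
  have T2 := tri y₄ y₂ y₃ (Ne.symm h24) h23 (Ne.symm h34) (b y₄ y₂) f₁ f₂ hc31v hf1 hf2
  -- bounds
  have hf0b : f₀ ≤ b y₁ y₂ := by
    have := ((hval.2 y₁ y₂ h12).1 (by rw [hf0]; simp)).2
    rw [hf0] at this
    exact_mod_cast this
  have hf2a : a y₃ y₄ ≤ f₂ := by
    have := ((hval.2 y₃ y₄ h34).1 (by rw [hf2]; simp)).1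
    rw [hf2] at this
    exact_mod_cast this
  have hf2a' : -(b y₄ y₃) ≤ f₂ := by rw [← hba hsym y₃ y₄ h34]; exact hf2a
  -- Lipschitz facts
  have L1 : b y₁ y₂ ≤ b y₁ y₃ + 1 := lip1 hsym hsep hwt h13 (Ne.symm h23) h12
  have L2 : b y₄ y₃ ≤ b y₄ y₂ + 1 := lip1 hsym hsep hwt (Ne.symm h24) h23 (Ne.symm h34)
  exact ⟨y₁, y₄, y₃, y₂, h14, h13, h12, Ne.symm h34, Ne.symm h24, Ne.symm h23,
    by omega, by omega⟩

theorem forward_dir (hsym : ∀ i j : Fin n, i < j → a j i = -(b i j) ∧ b j i = -(a i j))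
    (hsep : ∀ i j : Fin n, i < j → a i j ≤ 0 ∧ 0 ≤ b i j)
    (hwt : WeakTriangle a b)
    (h : ∃ w : Fin n → Fin n → WithBot ℤ, ValidW a b w ∧
        (∃ c : List (Fin n), MAscending w c ∧ c.length = 4) ∧
        (∀ c : List (Fin n), MAscending w c → ¬ c.length < 4)) :
    ∃ i₁ i₂ j₁ j₂ : Fin n, i₁ ≠ i₂ ∧ i₁ ≠ j₁ ∧ i₁ ≠ j₂ ∧ i₂ ≠ j₁ ∧ i₂ ≠ j₂ ∧ j₁ ≠ j₂ ∧
      b i₁ j₁ < b i₁ j₂ ∧ b i₂ j₂ < b i₂ j₁ := by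
  obtain ⟨w, hval, ⟨c, hasc, hlen⟩, hno3⟩ := h
  obtain ⟨hcyc, hsum⟩ := hasc
  rcases c with _ | ⟨x₁, _ | ⟨x₂, _ | ⟨x₃, _ | ⟨x₄, t⟩⟩⟩⟩ <;> simp at hlen
  subst hlen
  have hnd := hcyc.2.1
  have h12 : x₁ ≠ x₂ := by simp [List.nodup_cons] at hnd; tauto
  have h13 : x₁ ≠ x₃ := by simp [List.nodup_cons] at hnd; tauto
  have h14 : x₁ ≠ x₄ := by simp [List.nodup_cons] at hnd; tauto
  have h23 : x₂ ≠ x₃ := by simp [List.nodup_cons] at hnd; tauto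
  have h24 : x₂ ≠ x₄ := by simp [List.nodup_cons] at hnd; tauto
  have h34 : x₃ ≠ x₄ := by simp [List.nodup_cons] at hnd; tauto
  have hcp : cpairs [x₁, x₂, x₃, x₄] = [(x₁, x₂), (x₂, x₃), (x₃, x₄), (x₄, x₁)] := by
    simp [cpairs, List.rotate_cons_succ]
  have he := hcyc.2.2
  rcases WithBot.ne_bot_iff_exists.1 (he (x₁, x₂) (by rw [hcp]; simp)) with ⟨e₀, he₀⟩
  rcases WithBot.ne_bot_iff_exists.1 (he (x₂, x₃) (by rw [hcp]; simp)) with ⟨e₁, he₁⟩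
  rcases WithBot.ne_bot_iff_exists.1 (he (x₃, x₄) (by rw [hcp]; simp)) with ⟨e₂, he₂⟩
  rcases WithBot.ne_bot_iff_exists.1 (he (x₄, x₁) (by rw [hcp]; simp)) with ⟨e₃, he₃⟩
  have hs : 0 ≤ e₀ + e₁ + e₂ + e₃ := by
    rw [cycWeight, hcp] at hsum
    simp only [List.map_cons, List.map_nil, List.sum_cons, List.sum_nil,
      ← he₀, ← he₁, ← he₂, ← he₃] at hsum
    rw [add_zero, ← WithBot.coe_add, ← WithBot.coe_add, ← WithBot.coe_add] at hsum
    have : (0:ℤ) ≤ e₀ + (e₁ + (e₂ + e₃)) := by exact_mod_cast hsum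
    omega
  have hch1 : w x₁ x₃ ≠ ⊥ ∨ w x₃ x₁ ≠ ⊥ := by
    by_cases hb13 : w x₁ x₃ = ⊥
    · right; rw [(hval.2 x₁ x₃ h13).2.1.1 hb13]; simp
    · exact Or.inl hb13
  have hch2 : w x₂ x₄ ≠ ⊥ ∨ w x₄ x₂ ≠ ⊥ := by
    by_cases hb24 : w x₂ x₄ = ⊥
    · right; rw [(hval.2 x₂ x₄ h24).2.1.1 hb24]; simp
    · exact Or.inl hb24
  rcases hch1 with hA | hB <;> rcases hch2 with hA' | hB'
  · exact fwd_core hsym hsep hwt hval hno3 h23 h24 (Ne.symm h12) h34 (Ne.symm h13)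
      (Ne.symm h14) he₁.symm he₂.symm he₃.symm he₀.symm (by omega) hA' hA
  · exact fwd_core hsym hsep hwt hval hno3 h12 h13 h14 h23 h24 h34
      he₀.symm he₁.symm he₂.symm he₃.symm (by omega) hA hB'
  · exact fwd_core hsym hsep hwt hval hno3 h34 (Ne.symm h13) (Ne.symm h23)
      (Ne.symm h14) (Ne.symm h24) h12
      he₂.symm he₃.symm he₀.symm he₁.symm (by omega) hB hA'
  · exact fwd_core hsym hsep hwt hval hno3 (Ne.symm h14) (Ne.symm h24) (Ne.symm h34)
      h12 h13 h23 he₃.symm he₀.symm he₁.symm he₂.symm (by omega) hB' hB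


theorem pair_twoway {w : Fin n → Fin n → WithBot ℤ} {u v : Fin n} (x : ℤ)
    (hax : a u v ≤ x) (hxb : x ≤ b u v - 1) (hay : a v u ≤ -1 - x) (hyb : -1 - x ≤ b v u - 1)
    (h1 : w u v = (x : WithBot ℤ)) (h2 : w v u = ((-1 - x : ℤ) : WithBot ℤ)) :
    PairOK a b w u v ∧ PairOK a b w v u := by
  refine ⟨⟨fun _ => ?_, ?_, ?_⟩, ⟨fun _ => ?_, ?_, ?_⟩⟩
  · rw [h1]; exact ⟨WithBot.coe_le_coe.2 hax, WithBot.coe_le_coe.2 (by omega)⟩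
  · rw [h1, h2]
    constructor
    · intro hh; exact absurd hh (by simp)
    · intro hh; rw [WithBot.coe_inj] at hh; omega
  · intro x' y' hx' hy'
    rw [h1] at hx'; rw [h2] at hy'
    rw [WithBot.coe_inj] at hx' hy'; omega
  · rw [h2]; exact ⟨WithBot.coe_le_coe.2 hay, WithBot.coe_le_coe.2 (by omega)⟩
  · rw [h2, h1]
    constructor
    · intro hh; exact absurd hh (by simp)
    · intro hh; rw [WithBot.coe_inj] at hh; omega
  · intro x' y' hx' hy'
    rw [h2] at hx'; rw [h1] at hy'
    rw [WithBot.coe_inj] at hx' hy'; omega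

theorem sum_4m (ψ : Fin n → ℤ) : ∀ L : List (Fin n × Fin n),
    (∀ p ∈ L, ∃ m : ℤ, ψ p.1 - ψ p.2 = 4 * m - 1) →
    ∃ M : ℤ, (L.map fun p => ψ p.1 - ψ p.2).sum = 4 * M - L.length := by
  intro L
  induction L with
  | nil => intro _; exact ⟨0, by simp⟩
  | cons p t ih =>
    intro h
    rcases h p (by simp) with ⟨m, hm⟩
    rcases ih (fun q hq => h q (by simp [hq])) with ⟨M, hM⟩
    refine ⟨m + M, ?_⟩
    simp only [List.map_cons, List.sum_cons, hm, hM, List.length_cons]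
    push_cast
    ring

def ws4 (b : Fin n → Fin n → ℤ) (i₁ i₂ j₁ j₂ : Fin n) : Fin n → Fin n → WithBot ℤ := fun u v =>
  if u = i₁ then
    (if v = i₂ then (if 1 ≤ b i₂ i₁ then ((-1 : ℤ) : WithBot ℤ) else ⊥)
     else if v = j₁ then ((b i₁ j₁ : ℤ) : WithBot ℤ)
     else if v = j₂ then ((b i₁ j₂ : ℤ) : WithBot ℤ) else ⊥)
  else if u = i₂ then
    (if v = i₁ then ((0 : ℤ) : WithBot ℤ)
     else if v = j₁ then ((b i₂ j₁ - 1 : ℤ) : WithBot ℤ)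
     else if v = j₂ then ((b i₂ j₂ : ℤ) : WithBot ℤ) else ⊥)
  else if u = j₁ then
    (if v = i₂ then ((-(b i₂ j₁) : ℤ) : WithBot ℤ)
     else if v = j₂ then (if 1 ≤ b j₂ j₁ then ((-1 : ℤ) : WithBot ℤ) else ⊥) else ⊥)
  else if u = j₂ then (if v = j₁ then ((0 : ℤ) : WithBot ℤ) else ⊥)
  else ⊥

theorem backward_dir (hsym : ∀ i j : Fin n, i < j → a j i = -(b i j) ∧ b j i = -(a i j))
    (hsep : ∀ i j : Fin n, i < j → a i j ≤ 0 ∧ 0 ≤ b i j)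
    (hwt : WeakTriangle a b) {i₁ i₂ j₁ j₂ : Fin n}
    (d12 : i₁ ≠ i₂) (d13 : i₁ ≠ j₁) (d14 : i₁ ≠ j₂)
    (d23 : i₂ ≠ j₁) (d24 : i₂ ≠ j₂) (d34 : j₁ ≠ j₂)
    (hx1 : b i₁ j₁ < b i₁ j₂) (hx2 : b i₂ j₂ < b i₂ j₁) :
    ∃ w : Fin n → Fin n → WithBot ℤ, ValidW a b w ∧
      (∃ c : List (Fin n), MAscending w c ∧ c.length = 4) ∧
      (∀ c : List (Fin n), MAscending w c → ¬ c.length < 4) := by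
  have L1 : b i₁ j₂ ≤ b i₁ j₁ + 1 := lip1 hsym hsep hwt d13 d34 d14
  have L2 : b i₂ j₁ ≤ b i₂ j₂ + 1 := lip1 hsym hsep hwt d24 (Ne.symm d34) d23
  have L3 : b i₁ j₂ ≤ b i₂ j₂ + 1 := lip2 hsym hsep hwt d12 d24 d14
  have L4 : b i₂ j₁ ≤ b i₁ j₁ + 1 := lip2 hsym hsep hwt (Ne.symm d12) d13 d23
  have E12 : b i₁ j₂ = b i₁ j₁ + 1 := by omega
  have E22 : b i₂ j₂ = b i₁ j₁ := by omega
  have E21 : b i₂ j₁ = b i₁ j₁ + 1 := by omega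
  have hB0 : 0 ≤ b i₁ j₁ := hb0 hsym hsep i₁ j₁ d13
  set S : Finset (Fin n) := {i₁, i₂, j₁, j₂} with hSdef
  have hm1 : i₁ ∈ S := by simp [hSdef]
  have hm2 : i₂ ∈ S := by simp [hSdef]
  have hm3 : j₁ ∈ S := by simp [hSdef]
  have hm4 : j₂ ∈ S := by simp [hSdef]
  set w : Fin n → Fin n → WithBot ℤ := base b S (ws4 b i₁ i₂ j₁ j₂) with hwdef
  have w12 : w i₁ i₂ = (if 1 ≤ b i₂ i₁ then ((-1 : ℤ) : WithBot ℤ) else ⊥) := by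
    rw [hwdef, base_inS d12 hm1 hm2]; simp [ws4, d12, d13, d14, d23, d24, d34,
      Ne.symm d12, Ne.symm d13, Ne.symm d14, Ne.symm d23, Ne.symm d24, Ne.symm d34]
  have w21 : w i₂ i₁ = ((0 : ℤ) : WithBot ℤ) := by
    rw [hwdef, base_inS (Ne.symm d12) hm2 hm1]; simp [ws4, d12, d13, d14, d23, d24, d34,
      Ne.symm d12, Ne.symm d13, Ne.symm d14, Ne.symm d23, Ne.symm d24, Ne.symm d34]
  have w13 : w i₁ j₁ = ((b i₁ j₁ : ℤ) : WithBot ℤ) := by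
    rw [hwdef, base_inS d13 hm1 hm3]; simp [ws4, d12, d13, d14, d23, d24, d34,
      Ne.symm d12, Ne.symm d13, Ne.symm d14, Ne.symm d23, Ne.symm d24, Ne.symm d34]
  have w31 : w j₁ i₁ = ⊥ := by
    rw [hwdef, base_inS (Ne.symm d13) hm3 hm1]; simp [ws4, d12, d13, d14, d23, d24, d34,
      Ne.symm d12, Ne.symm d13, Ne.symm d14, Ne.symm d23, Ne.symm d24, Ne.symm d34]
  have w14 : w i₁ j₂ = ((b i₁ j₂ : ℤ) : WithBot ℤ) := by
    rw [hwdef, base_inS d14 hm1 hm4]; simp [ws4, d12, d13, d14, d23, d24, d34,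
      Ne.symm d12, Ne.symm d13, Ne.symm d14, Ne.symm d23, Ne.symm d24, Ne.symm d34]
  have w41 : w j₂ i₁ = ⊥ := by
    rw [hwdef, base_inS (Ne.symm d14) hm4 hm1]; simp [ws4, d12, d13, d14, d23, d24, d34,
      Ne.symm d12, Ne.symm d13, Ne.symm d14, Ne.symm d23, Ne.symm d24, Ne.symm d34]
  have w23 : w i₂ j₁ = ((b i₂ j₁ - 1 : ℤ) : WithBot ℤ) := by
    rw [hwdef, base_inS d23 hm2 hm3]; simp [ws4, d12, d13, d14, d23, d24, d34,
      Ne.symm d12, Ne.symm d13, Ne.symm d14, Ne.symm d23, Ne.symm d24, Ne.symm d34]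
  have w32 : w j₁ i₂ = ((-(b i₂ j₁) : ℤ) : WithBot ℤ) := by
    rw [hwdef, base_inS (Ne.symm d23) hm3 hm2]; simp [ws4, d12, d13, d14, d23, d24, d34,
      Ne.symm d12, Ne.symm d13, Ne.symm d14, Ne.symm d23, Ne.symm d24, Ne.symm d34]
  have w24 : w i₂ j₂ = ((b i₂ j₂ : ℤ) : WithBot ℤ) := by
    rw [hwdef, base_inS d24 hm2 hm4]; simp [ws4, d12, d13, d14, d23, d24, d34,
      Ne.symm d12, Ne.symm d13, Ne.symm d14, Ne.symm d23, Ne.symm d24, Ne.symm d34]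
  have w42 : w j₂ i₂ = ⊥ := by
    rw [hwdef, base_inS (Ne.symm d24) hm4 hm2]; simp [ws4, d12, d13, d14, d23, d24, d34,
      Ne.symm d12, Ne.symm d13, Ne.symm d14, Ne.symm d23, Ne.symm d24, Ne.symm d34]
  have w34 : w j₁ j₂ = (if 1 ≤ b j₂ j₁ then ((-1 : ℤ) : WithBot ℤ) else ⊥) := by
    rw [hwdef, base_inS d34 hm3 hm4]; simp [ws4, d12, d13, d14, d23, d24, d34,
      Ne.symm d12, Ne.symm d13, Ne.symm d14, Ne.symm d23, Ne.symm d24, Ne.symm d34]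
  have w43 : w j₂ j₁ = ((0 : ℤ) : WithBot ℤ) := by
    rw [hwdef, base_inS (Ne.symm d34) hm4 hm3]; simp [ws4, d12, d13, d14, d23, d24, d34,
      Ne.symm d12, Ne.symm d13, Ne.symm d14, Ne.symm d23, Ne.symm d24, Ne.symm d34]
  have hval : ValidW a b w := by
    refine base_valid (hab' hsym hsep) ?_
    intro u v hu hv huv
    rw [hSdef] at hu hv
    simp only [Finset.mem_insert, Finset.mem_singleton] at hu hv
    have P12 := pair_zero (a := a) (hb0 hsym hsep i₂ i₁ (Ne.symm d12))
      (hb0 hsym hsep i₁ i₂ d12) (hba hsym i₁ i₂ d12) (ha0 hsym hsep i₂ i₁ (Ne.symm d12)) w21 w12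
    have P34 := pair_zero (a := a) (hb0 hsym hsep j₂ j₁ (Ne.symm d34))
      (hb0 hsym hsep j₁ j₂ d34) (hba hsym j₁ j₂ d34) (ha0 hsym hsep j₂ j₁ (Ne.symm d34)) w43 w34
    have P13 := pair_oneway (a := a) (hab' hsym hsep i₁ j₁ d13) w13 w31
    have P14 := pair_oneway (a := a) (hab' hsym hsep i₁ j₂ d14) w14 w41
    have P24 := pair_oneway (a := a) (hab' hsym hsep i₂ j₂ d24) w24 w42
    have hw32' : w j₁ i₂ = ((-1 - (b i₂ j₁ - 1) : ℤ) : WithBot ℤ) := by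
      rw [w32]; congr 1; ring
    have hax23 : a i₂ j₁ ≤ b i₂ j₁ - 1 := by
      have h1 := ha0 hsym hsep i₂ j₁ d23; omega
    have hxb23 : b i₂ j₁ - 1 ≤ b i₂ j₁ - 1 := le_refl _
    have hay23 : a j₁ i₂ ≤ -1 - (b i₂ j₁ - 1) := by
      have h1 := hba hsym j₁ i₂ (Ne.symm d23); omega
    have hyb23 : -1 - (b i₂ j₁ - 1) ≤ b j₁ i₂ - 1 := by
      have h1 := hb0 hsym hsep j₁ i₂ (Ne.symm d23); omega
    have P23 := pair_twoway (a := a) (b i₂ j₁ - 1) hax23 hxb23 hay23 hyb23 w23 hw32'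
    rcases hu with h | h | h | h <;> subst u <;> rcases hv with h | h | h | h <;> subst v
    · exact absurd rfl huv
    · exact P12.2
    · exact P13.1
    · exact P14.1
    · exact P12.1
    · exact absurd rfl huv
    · exact P23.1
    · exact P24.1
    · exact P13.2
    · exact P23.2
    · exact absurd rfl huv
    · exact P34.2
    · exact P14.2
    · exact P24.2
    · exact P34.1
    · exact absurd rfl huv
  refine ⟨w, hval, ?_, ?_⟩
  · -- the ascending 4-cycle
    refine ⟨[i₁, j₂, j₁, i₂], ⟨⟨by simp, ?_, ?_⟩, ?_⟩, by simp⟩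
    · simp [List.nodup_cons, d12, d13, d14, d23, d24, d34,
        Ne.symm d12, Ne.symm d13, Ne.symm d14, Ne.symm d23, Ne.symm d24, Ne.symm d34]
    · have hcp : cpairs [i₁, j₂, j₁, i₂] = [(i₁, j₂), (j₂, j₁), (j₁, i₂), (i₂, i₁)] := by
        simp [cpairs, List.rotate_cons_succ]
      intro p hp
      rw [hcp] at hp
      simp only [List.mem_cons, List.not_mem_nil, or_false] at hp
      rcases hp with h | h | h | h <;> rw [h]
      · simp [w14]
      · simp [w43]
      · simp [w32]
      · simp [w21]
    · have hcp : cpairs [i₁, j₂, j₁, i₂] = [(i₁, j₂), (j₂, j₁), (j₁, i₂), (i₂, i₁)] := by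
        simp [cpairs, List.rotate_cons_succ]
      rw [cycWeight, hcp]
      simp only [List.map_cons, List.map_nil, List.sum_cons, List.sum_nil,
        w14, w43, w32, w21, add_zero, ← WithBot.coe_add]
      exact_mod_cast (by omega : (0:ℤ) ≤ b i₁ j₂ + (0 + -b i₂ j₁))
  · -- no short ascending cycle
    intro c hasc hlt
    obtain ⟨hcyc, hsum⟩ := hasc
    have hin : ∀ x ∈ c, x ∈ S := by
      refine confine S w (fun u => if u ∈ S then 0 else (u : ℤ) + 1)
        (fun u hu => by simp [hu]) ?_ hcyc
      intro u v hne'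
      exact base_conf u v hne'
    set φ : Fin n → ℤ := fun v => if v = j₁ ∨ v = j₂ then -2 * (b i₁ j₁ + 1) else 0 with hφdef
    set ε : Fin n × Fin n → ℤ := fun p =>
      if (p.1 = i₁ ∧ p.2 = j₂) ∨ (p.1 = j₂ ∧ p.2 = j₁) ∨ (p.1 = j₁ ∧ p.2 = i₂) ∨
          (p.1 = i₂ ∧ p.2 = i₁) then 0 else 2 with hεdef
    have hφ1 : φ i₁ = 0 := by simp [hφdef, d13, d14]
    have hφ2 : φ i₂ = 0 := by simp [hφdef, d23, d24]
    have hφ3 : φ j₁ = -2 * (b i₁ j₁ + 1) := by simp [hφdef]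
    have hφ4 : φ j₂ = -2 * (b i₁ j₁ + 1) := by simp [hφdef]
    have HS : ∀ u v : Fin n, u ∈ S → v ∈ S → w u v ≠ ⊥ →
        ∃ x : ℤ, w u v = (x : WithBot ℤ) ∧ 2 * x ≤ (φ u - φ v) - ε (u, v) := by
      intro u v hu hv hne'
      rw [hSdef] at hu hv
      simp only [Finset.mem_insert, Finset.mem_singleton] at hu hv
      rcases hu with h | h | h | h <;> subst u <;> rcases hv with h | h | h | h <;> subst v
      · exact absurd (by rw [hwdef]; simp [base]) hne'
      · by_cases hc : 1 ≤ b i₂ i₁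
        · refine ⟨-1, by rw [w12, if_pos hc], ?_⟩
          have hε : ε (i₁, i₂) = 2 := by simp [hεdef, d24, d14, d13, d12]
          rw [hφ1, hφ2, hε]; omega
        · exact absurd (by rw [w12, if_neg hc]) hne'
      · refine ⟨b i₁ j₁, w13, ?_⟩
        have hε : ε (i₁, j₁) = 2 := by simp [hεdef, d34, d14, d13, d12]
        rw [hφ1, hφ3, hε]; omega
      · refine ⟨b i₁ j₂, w14, ?_⟩
        have hε : ε (i₁, j₂) = 0 := by simp [hεdef]
        rw [hφ1, hφ4, hε]; omega
      · refine ⟨0, w21, ?_⟩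
        have hε : ε (i₂, i₁) = 0 := by simp [hεdef, Ne.symm d12, d24, d23]
        rw [hφ1, hφ2, hε]; omega
      · exact absurd (by rw [hwdef]; simp [base]) hne'
      · refine ⟨b i₂ j₁ - 1, w23, ?_⟩
        have hε : ε (i₂, j₁) = 2 := by simp [hεdef, Ne.symm d12, d24, d23, Ne.symm d13]
        rw [hφ2, hφ3, hε]; omega
      · refine ⟨b i₂ j₂, w24, ?_⟩
        have hε : ε (i₂, j₂) = 2 := by simp [hεdef, Ne.symm d12, d24, d23, Ne.symm d14]
        rw [hφ2, hφ4, hε]; omega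
      · exact absurd w31 hne'
      · refine ⟨-(b i₂ j₁), w32, ?_⟩
        have hε : ε (j₁, i₂) = 0 := by simp [hεdef, Ne.symm d13, d34]
        rw [hφ3, hφ2, hε]; omega
      · exact absurd (by rw [hwdef]; simp [base]) hne'
      · by_cases hc : 1 ≤ b j₂ j₁
        · refine ⟨-1, by rw [w34, if_pos hc], ?_⟩
          have hε : ε (j₁, j₂) = 2 := by
            simp [hεdef, Ne.symm d13, d34, Ne.symm d24, Ne.symm d23]
          rw [hφ3, hφ4, hε]; omega
        · exact absurd (by rw [w34, if_neg hc]) hne'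
      · exact absurd w41 hne'
      · exact absurd w42 hne'
      · refine ⟨0, w43, ?_⟩
        have hε : ε (j₂, j₁) = 0 := by simp [hεdef, Ne.symm d14]
        rw [hφ4, hφ3, hε]; omega
      · exact absurd (by rw [hwdef]; simp [base]) hne'
    have hbound : ∀ p ∈ cpairs c, ∃ x : ℤ, w p.1 p.2 = (x : WithBot ℤ) ∧
        2 * x ≤ ((fun p : Fin n × Fin n => (φ p.1 - φ p.2) - ε p) p) := by
      intro p hp
      rcases HS p.1 p.2 (hin _ (mem_of_cpairs hp).1) (hin _ (mem_of_cpairs hp).2)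
        (hcyc.2.2 p hp) with ⟨x, hx1', hx2'⟩
      exact ⟨x, hx1', hx2'⟩
    rcases key_sum w (fun p => (φ p.1 - φ p.2) - ε p) (cpairs c) hbound with ⟨X, hX, hXb⟩
    have hsplit : ((cpairs c).map fun p => (φ p.1 - φ p.2) - ε p).sum
        = 0 - ((cpairs c).map ε).sum := by
      rw [sum_map_sub (fun p : Fin n × Fin n => φ p.1 - φ p.2) ε, telescope]
    have hX0 : (0 : ℤ) ≤ X := by
      rw [cycWeight, hX] at hsum
      exact_mod_cast hsum
    have hε0 : ((cpairs c).map ε).sum ≤ 0 := by omega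
    have hεnn : ∀ z ∈ (cpairs c).map ε, 0 ≤ z := by
      intro z hz
      rcases List.mem_map.1 hz with ⟨p, hp, rfl⟩
      rw [hεdef]
      dsimp only
      split <;> omega
    have hall := allzero _ hεnn hε0
    have hE4 : ∀ p ∈ cpairs c,
        (p.1 = i₁ ∧ p.2 = j₂) ∨ (p.1 = j₂ ∧ p.2 = j₁) ∨ (p.1 = j₁ ∧ p.2 = i₂) ∨
          (p.1 = i₂ ∧ p.2 = i₁) := by
      intro p hp
      have hz := hall _ (List.mem_map.2 ⟨p, hp, rfl⟩)
      by_contra hcon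
      rw [hεdef] at hz
      dsimp only at hz
      rw [if_neg hcon] at hz
      omega
    set ψc : Fin n → ℤ := fun v => if v = i₁ then 0 else if v = j₂ then 1
      else if v = j₁ then 2 else 3 with hψcdef
    have hψ1 : ψc i₁ = 0 := by simp [hψcdef]
    have hψ4 : ψc j₂ = 1 := by simp [hψcdef, Ne.symm d14]
    have hψ3 : ψc j₁ = 2 := by simp [hψcdef, Ne.symm d13, d34]
    have hψ2 : ψc i₂ = 3 := by simp [hψcdef, Ne.symm d12, d24, d23]
    have h4m : ∀ p ∈ cpairs c, ∃ m : ℤ, ψc p.1 - ψc p.2 = 4 * m - 1 := by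
      intro p hp
      rcases hE4 p hp with ⟨h1, h2⟩ | ⟨h1, h2⟩ | ⟨h1, h2⟩ | ⟨h1, h2⟩ <;> rw [h1, h2]
      · exact ⟨0, by rw [hψ1, hψ4]; norm_num⟩
      · exact ⟨0, by rw [hψ4, hψ3]; norm_num⟩
      · exact ⟨0, by rw [hψ3, hψ2]; norm_num⟩
      · exact ⟨1, by rw [hψ2, hψ1]; norm_num⟩
    rcases sum_4m ψc (cpairs c) h4m with ⟨M, hM⟩
    rw [telescope, length_cpairs] at hM
    have hlen2 : 2 ≤ c.length := hcyc.1
    have : (0 : ℤ) = 4 * M - (c.length : ℤ) := hM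
    omega

end Main

end Aux12

theorem stmt12 (n : ℕ) (a b : Fin n → Fin n → ℤ)
    (hab : ∀ i j : Fin n, i < j → a i j ≤ b i j)
    (hsym : ∀ i j : Fin n, i < j → a j i = -(b i j) ∧ b j i = -(a i j))
    (hsep : ∀ i j : Fin n, i < j → a i j ≤ 0 ∧ 0 ≤ b i j)
    (hwt : WeakTriangle a b) :
    (∃ w : Fin n → Fin n → WithBot ℤ, ValidW a b w ∧
        (∃ c : List (Fin n), MAscending w c ∧ c.length = 4) ∧
        (∀ c : List (Fin n), MAscending w c → ¬ c.length < 4)) ↔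
      (∃ i₁ i₂ j₁ j₂ : Fin n, i₁ ≠ i₂ ∧ i₁ ≠ j₁ ∧ i₁ ≠ j₂ ∧ i₂ ≠ j₁ ∧ i₂ ≠ j₂ ∧ j₁ ≠ j₂ ∧
        b i₁ j₁ < b i₁ j₂ ∧ b i₂ j₂ < b i₂ j₁) := by
  constructor
  · intro h
    exact Aux12.forward_dir hsym hsep hwt h
  · rintro ⟨i₁, i₂, j₁, j₂, d12, d13, d14, d23, d24, d34, hx1, hx2⟩
    exact Aux12.backward_dir hsym hsep hwt d12 d13 d14 d23 d24 d34 hx1 hx2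
end
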